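/- arXiv:2504.15394 — 4 statements merged into one kernel-verified Lean document; each statement's English description precedes it below -/
import Mathlib

section
/- Let f : {0,1}^n → ℝ, let q be a probability distribution on the symmetry group Sym(f), and let Π be a random permutation drawn from q. Then for any A ⊆ [n] and any k ∈ {0,...,n}, the sum over sets S of size k of the squared Fourier coefficients of the restriction f_A equals the sum over sets S of size k of f̂(S)² · Pr(Π(S) ⊆ A). Consequently, Var(f_A) = Σ_{S ≠ ∅} f̂(S)² · Pr(Π(S) ⊆ A). -/
open Finset

/-- Weight of a point under the i.i.d. Bernoulli(p) product measure on `{0,1}^n`. -/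
noncomputable def wt (p : ℝ) {n : ℕ} (x : Fin n → Bool) : ℝ :=
  ∏ i, if x i then p else 1 - p

/-- Expectation with respect to the i.i.d. Bernoulli(p) product measure. -/
noncomputable def pexp (p : ℝ) {n : ℕ} (g : (Fin n → Bool) → ℝ) : ℝ :=
  ∑ x : Fin n → Bool, wt p x * g x

/-- The p-biased Fourier basis function. -/
noncomputable def chi (p : ℝ) {n : ℕ} (S : Finset (Fin n)) (x : Fin n → Bool) : ℝ :=
  ∏ i ∈ S, if x i then -Real.sqrt ((1 - p) / p) else Real.sqrt (p / (1 - p))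

/-- The p-biased Fourier coefficient `f̂(S) = E[f(X)·u_S(X)]`. -/
noncomputable def fhat (p : ℝ) {n : ℕ} (f : (Fin n → Bool) → ℝ)
    (S : Finset (Fin n)) : ℝ :=
  pexp p fun x => f x * chi p S x

/-- The restriction `f_A(x) = E[f(X) | X_A = x_A]`. -/
noncomputable def restrictAvg (p : ℝ) {n : ℕ} (A : Finset (Fin n))
    (f : (Fin n → Bool) → ℝ) : (Fin n → Bool) → ℝ :=
  fun x => pexp p fun y => f fun i => if i ∈ A then x i else y i

/-! ### Auxiliary machinery -/

/-- The single-coordinate p-biased basis factor. -/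
noncomputable def ee (p : ℝ) (b : Bool) : ℝ :=
  if b then -Real.sqrt ((1 - p) / p) else Real.sqrt (p / (1 - p))

lemma chi_eq (p : ℝ) {n : ℕ} (S : Finset (Fin n)) (x : Fin n → Bool) :
    chi p S x = ∏ i ∈ S, ee p (x i) := rfl

lemma sum_prod_bool {n : ℕ} (g : Fin n → Bool → ℝ) :
    ∑ x : Fin n → Bool, ∏ i, g i (x i) = ∏ i, (g i true + g i false) := by
  rw [← Fintype.piFinset_univ, ← Finset.prod_univ_sum]; simp

lemma pexp_prod (p : ℝ) {n : ℕ} (g : Fin n → Bool → ℝ) :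
    pexp p (fun x => ∏ i, g i (x i)) = ∏ i, (p * g i true + (1 - p) * g i false) := by
  unfold pexp wt
  have h : ∀ x : Fin n → Bool, (∏ i, if x i then p else 1 - p) * ∏ i, g i (x i)
      = ∏ i, ((if x i then p else 1 - p) * g i (x i)) := by
    intro x; rw [← Finset.prod_mul_distrib]
  simp_rw [h]
  rw [sum_prod_bool (fun i b => (if b then p else 1 - p) * g i b)]
  simp

section
variable {p : ℝ} (hp0 : 0 < p) (hp1 : p < 1)

include hp0 hp1 in
lemma ee_mean : p * ee p true + (1 - p) * ee p false = 0 := by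
  have h1 : (0:ℝ) < 1 - p := by linarith
  have hpa : Real.sqrt p * Real.sqrt p = p := Real.mul_self_sqrt hp0.le
  have hpb : Real.sqrt (1-p) * Real.sqrt (1-p) = 1-p := Real.mul_self_sqrt h1.le
  have ha := Real.sqrt_pos.mpr hp0
  have hb := Real.sqrt_pos.mpr h1
  have e1 : ee p true = -(Real.sqrt (1-p) / Real.sqrt p) := by
    simp [ee, Real.sqrt_div h1.le]
  have e2 : ee p false = Real.sqrt p / Real.sqrt (1-p) := by
    simp [ee, Real.sqrt_div hp0.le]
  rw [e1, e2]; field_simp; nlinarith [hpa, hpb]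

include hp0 hp1 in
lemma ee_sq_true : ee p true ^ 2 = (1-p)/p := by
  have h1 : (0:ℝ) < 1 - p := by linarith
  simp only [ee, if_true]
  rw [neg_sq, Real.sq_sqrt (by positivity)]

include hp0 hp1 in
lemma ee_sq_false : ee p false ^ 2 = p/(1-p) := by
  have h1 : (0:ℝ) < 1 - p := by linarith
  simp only [ee, Bool.false_eq_true, if_false]
  rw [Real.sq_sqrt (by positivity)]

include hp0 hp1 in
lemma ee_mul_ne (b c : Bool) (h : b ≠ c) : ee p b * ee p c = -1 := by
  have h1 : (0:ℝ) < 1 - p := by linarith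
  have key : Real.sqrt ((1-p)/p) * Real.sqrt (p/(1-p)) = 1 := by
    rw [← Real.sqrt_mul (by positivity)]
    rw [show (1-p)/p * (p/(1-p)) = 1 by field_simp]
    exact Real.sqrt_one
  rcases b <;> rcases c <;> simp_all [ee] <;> nlinarith [key]

include hp0 hp1 in
lemma one_add_ee_mul (b c : Bool) :
    1 + ee p b * ee p c = if b = c then (if b then p else 1-p)⁻¹ else 0 := by
  have h1 : (0:ℝ) < 1 - p := by linarith
  have hp' := hp0.ne'
  rcases b <;> rcases c
  · rw [← sq, ee_sq_false hp0 hp1]; simp; field_simp; ring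
  · rw [ee_mul_ne hp0 hp1 _ _ (by simp)]; simp
  · rw [ee_mul_ne hp0 hp1 _ _ (by simp)]; simp
  · rw [← sq, ee_sq_true hp0 hp1]; simp; field_simp; ring

include hp0 hp1 in
lemma wt_pos {n : ℕ} (x : Fin n → Bool) : 0 < wt p x := by
  unfold wt
  apply Finset.prod_pos
  intro i _
  rcases x i <;> simp <;> linarith

include hp0 hp1 in
lemma pexp_chi {n : ℕ} (T : Finset (Fin n)) :
    pexp p (fun x => chi p T x) = if T = ∅ then 1 else 0 := by
  have h : ∀ x : Fin n → Bool, chi p T x = ∏ i, (if i ∈ T then ee p (x i) else 1) := by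
    intro x; rw [chi_eq, Finset.prod_ite_mem]; simp [Finset.inter_comm]
  simp_rw [h]
  rw [pexp_prod p (fun i b => if i ∈ T then ee p b else 1)]
  rcases eq_or_ne T ∅ with hT | hT
  · simp [hT]
  · rw [if_neg hT]
    obtain ⟨j, hj⟩ := Finset.nonempty_iff_ne_empty.mpr hT
    apply Finset.prod_eq_zero (Finset.mem_univ j)
    simpa [hj] using ee_mean hp0 hp1

include hp0 hp1 in
lemma chi_kernel {n : ℕ} (x y : Fin n → Bool) :
    ∑ S : Finset (Fin n), chi p S x * chi p S y
      = if x = y then (wt p x)⁻¹ else 0 := by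
  have h1 : ∀ S : Finset (Fin n),
      chi p S x * chi p S y = ∏ i ∈ S, (ee p (x i) * ee p (y i)) := by
    intro S; rw [chi_eq, chi_eq, ← Finset.prod_mul_distrib]
  simp_rw [h1]
  have h2 : ∑ S : Finset (Fin n), ∏ i ∈ S, (ee p (x i) * ee p (y i))
      = ∏ i, (ee p (x i) * ee p (y i) + 1) := by
    rw [Finset.prod_add, ← Finset.powerset_univ]
    exact (Finset.sum_congr rfl (fun t _ => by simp)).symm
  rw [h2]
  simp_rw [show ∀ i, ee p (x i) * ee p (y i) + 1 = 1 + ee p (x i) * ee p (y i) from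
    fun i => by ring, fun i => one_add_ee_mul hp0 hp1 (x i) (y i)]
  rcases eq_or_ne x y with hxy | hxy
  · subst hxy
    simp [wt, Finset.prod_inv_distrib]
  · rw [if_neg hxy]
    obtain ⟨j, hj⟩ := Function.ne_iff.mp hxy
    exact Finset.prod_eq_zero (Finset.mem_univ j) (by rw [if_neg hj])

include hp0 hp1 in
lemma parseval {n : ℕ} (g : (Fin n → Bool) → ℝ) :
    ∑ S : Finset (Fin n), (fhat p g S)^2 = pexp p (fun x => g x ^ 2) := by
  unfold fhat pexp
  simp_rw [sq, Finset.sum_mul_sum]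
  rw [Finset.sum_comm]
  refine (Finset.sum_congr rfl fun x _ => Finset.sum_comm).trans ?_
  have h : ∀ (x y : Fin n → Bool) (S : Finset (Fin n)),
      (wt p x * (g x * chi p S x)) * (wt p y * (g y * chi p S y))
      = (wt p x * g x * (wt p y * g y)) * (chi p S x * chi p S y) := by
    intros; ring
  simp_rw [h, ← Finset.mul_sum, chi_kernel hp0 hp1, mul_ite, mul_zero]
  rw [Finset.sum_congr rfl (fun x _ => Finset.sum_ite_eq (univ) x
    (fun y => wt p x * g x * (wt p y * g y) * (wt p x)⁻¹))]
  apply Finset.sum_congr rfl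
  intro x _
  rw [if_pos (Finset.mem_univ x)]
  have := (wt_pos hp0 hp1 x).ne'
  field_simp

end

/-- the coordinate-merge function -/
def mg {n : ℕ} (A : Finset (Fin n)) (x y : Fin n → Bool) : Fin n → Bool :=
  fun i => if i ∈ A then x i else y i

def mgEquiv {n : ℕ} (A : Finset (Fin n)) :
    ((Fin n → Bool) × (Fin n → Bool)) ≃ ((Fin n → Bool) × (Fin n → Bool)) where
  toFun z := (mg A z.1 z.2, mg A z.2 z.1)
  invFun z := (mg A z.1 z.2, mg A z.2 z.1)
  left_inv := by
    rintro ⟨x, y⟩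
    refine Prod.ext ?_ ?_ <;> funext i <;> by_cases h : i ∈ A <;> simp [mg, h]
  right_inv := by
    rintro ⟨x, y⟩
    refine Prod.ext ?_ ?_ <;> funext i <;> by_cases h : i ∈ A <;> simp [mg, h]

lemma wt_mg {p : ℝ} {n : ℕ} (A : Finset (Fin n)) (x y : Fin n → Bool) :
    wt p (mg A x y) * wt p (mg A y x) = wt p x * wt p y := by
  unfold wt
  rw [← Finset.prod_mul_distrib, ← Finset.prod_mul_distrib]
  apply Finset.prod_congr rfl
  intro i _
  by_cases h : i ∈ A <;> simp [mg, h, mul_comm]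

lemma chi_mg (p : ℝ) {n : ℕ} (A S : Finset (Fin n)) (x y : Fin n → Bool) :
    chi p S (mg A x y) = chi p (S ∩ A) x * chi p (S \ A) y := by
  simp only [chi_eq]
  rw [← Finset.prod_filter_mul_prod_filter_not S (· ∈ A)]
  congr 1
  · rw [show S.filter (· ∈ A) = S ∩ A from rfl]
    apply Finset.prod_congr rfl
    intro i hi
    simp [mg, (Finset.mem_inter.mp hi).2]
  · rw [show S.filter (¬ · ∈ A) = S \ A by ext i; simp [Finset.mem_sdiff]]
    apply Finset.prod_congr rfl
    intro i hi
    simp [mg, (Finset.mem_sdiff.mp hi).2]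

lemma fhat_restrict {p : ℝ} (hp0 : 0 < p) (hp1 : p < 1) {n : ℕ}
    (A : Finset (Fin n)) (f : (Fin n → Bool) → ℝ) (S : Finset (Fin n)) :
    fhat p (restrictAvg p A f) S = if S ⊆ A then fhat p f S else 0 := by
  have step1 : fhat p (restrictAvg p A f) S
      = ∑ z : (Fin n → Bool) × (Fin n → Bool),
          wt p z.1 * wt p z.2 * f (mg A z.1 z.2) * chi p S z.1 := by
    unfold fhat restrictAvg pexp
    rw [Fintype.sum_prod_type]
    apply Finset.sum_congr rfl
    intro x _
    show wt p x * ((∑ y : Fin n → Bool, wt p y * f (mg A x y)) * chi p S x)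
      = ∑ y : Fin n → Bool, wt p x * wt p y * f (mg A x y) * chi p S x
    rw [Finset.sum_mul, Finset.mul_sum]
    exact Finset.sum_congr rfl fun y _ => by ring
  rw [step1, ← Equiv.sum_comp (mgEquiv A)
    (fun z => wt p z.1 * wt p z.2 * f (mg A z.1 z.2) * chi p S z.1)]
  have step2 : ∀ z : (Fin n → Bool) × (Fin n → Bool),
      wt p (mgEquiv A z).1 * wt p (mgEquiv A z).2 * f (mg A (mgEquiv A z).1 (mgEquiv A z).2)
        * chi p S (mgEquiv A z).1
      = (wt p z.1 * (f z.1 * chi p (S ∩ A) z.1)) * (wt p z.2 * chi p (S \ A) z.2) := by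
    rintro ⟨x, y⟩
    show wt p (mg A x y) * wt p (mg A y x) * f (mg A (mg A x y) (mg A y x))
        * chi p S (mg A x y) = _
    have hm : mg A (mg A x y) (mg A y x) = x := by
      funext i; by_cases h : i ∈ A <;> simp [mg, h]
    rw [hm, wt_mg, chi_mg]
    ring
  simp_rw [step2]
  rw [Fintype.sum_prod_type]
  simp_rw [← Finset.mul_sum]
  rw [← Finset.sum_mul]
  have h1 : ∑ y : Fin n → Bool, wt p y * chi p (S \ A) y
      = if S \ A = ∅ then 1 else 0 := pexp_chi hp0 hp1 _
  rw [h1]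
  by_cases hS : S ⊆ A
  · rw [if_pos hS, if_pos (Finset.sdiff_eq_empty_iff_subset.mpr hS),
      Finset.inter_eq_left.mpr hS, mul_one]
    rfl
  · rw [if_neg hS, if_neg (fun h => hS (Finset.sdiff_eq_empty_iff_subset.mp h)), mul_zero]

lemma fhat_image {p : ℝ} {n : ℕ} (f : (Fin n → Bool) → ℝ) (π : Equiv.Perm (Fin n))
    (hf : ∀ x : Fin n → Bool, f (fun i => x (π.symm i)) = f x) (S : Finset (Fin n)) :
    fhat p f (S.image π) = fhat p f S := by
  unfold fhat pexp
  rw [← Equiv.sum_comp (Equiv.arrowCongr π (Equiv.refl Bool))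
    (fun x => wt p x * (f x * chi p (S.image π) x))]
  apply Finset.sum_congr rfl
  intro x _
  have he : (Equiv.arrowCongr π (Equiv.refl Bool)) x = fun i => x (π.symm i) := rfl
  rw [he]
  congr 1
  · unfold wt
    exact Equiv.prod_comp π.symm (fun i => if x i then p else 1 - p)
  congr 1
  · exact hf x
  · simp only [chi_eq]
    rw [Finset.prod_image (fun a _ b _ h => π.injective h)]
    apply Finset.prod_congr rfl
    intro i _
    simp

lemma sym_sum {n : ℕ} (p : ℝ) (f : (Fin n → Bool) → ℝ) (A : Finset (Fin n))
    (q : Equiv.Perm (Fin n) → ℝ) (hq1 : ∑ π : Equiv.Perm (Fin n), q π = 1)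
    (hsupp : ∀ π : Equiv.Perm (Fin n), q π ≠ 0 →
      ∀ x : Fin n → Bool, f (fun i => x (π.symm i)) = f x)
    (P : Finset (Fin n) → Prop) [DecidablePred P]
    (hP : ∀ (π : Equiv.Perm (Fin n)) (S : Finset (Fin n)), P (S.image π) ↔ P S) :
    ∑ S ∈ univ.filter P, fhat p f S ^ 2 *
        (∑ π : Equiv.Perm (Fin n), q π * (if S.image π ⊆ A then (1:ℝ) else 0))
    = ∑ S ∈ univ.filter P, fhat p f S ^ 2 * (if S ⊆ A then (1:ℝ) else 0) := by
  simp_rw [Finset.mul_sum]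
  rw [Finset.sum_comm]
  have key : ∀ π : Equiv.Perm (Fin n),
      ∑ S ∈ univ.filter P, fhat p f S ^ 2 * (q π * (if S.image π ⊆ A then (1:ℝ) else 0))
      = q π * ∑ S ∈ univ.filter P, fhat p f S ^ 2 * (if S ⊆ A then (1:ℝ) else 0) := by
    intro π
    by_cases hq : q π = 0
    · simp [hq]
    · rw [Finset.mul_sum]
      refine Finset.sum_nbij' (fun S => S.image π) (fun T => T.image π.symm) ?_ ?_ ?_ ?_ ?_
      · intro S hS
        simp only [Finset.mem_filter, Finset.mem_univ, true_and] at hS ⊢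
        exact (hP π S).mpr hS
      · intro T hT
        simp only [Finset.mem_filter, Finset.mem_univ, true_and] at hT ⊢
        exact (hP π.symm T).mpr hT
      · intro S _
        ext i
        simp [Finset.mem_image]
      · intro T _
        ext i
        simp [Finset.mem_image]
      · intro S _
        rw [fhat_image f π (hsupp π hq) S]
        ring
  rw [Finset.sum_congr rfl (fun π _ => key π), ← Finset.sum_mul, hq1, one_mul]

lemma var_eq {p : ℝ} (hp0 : 0 < p) (hp1 : p < 1) {n : ℕ} (g : (Fin n → Bool) → ℝ) :
    pexp p (fun x => g x ^ 2) - (pexp p g) ^ 2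
      = ∑ S ∈ univ.filter (fun S : Finset (Fin n) => S ≠ ∅), fhat p g S ^ 2 := by
  rw [← parseval hp0 hp1 g]
  have h0 : pexp p g = fhat p g ∅ := by
    simp [fhat, chi, pexp]
  rw [h0,
    ← Finset.sum_filter_add_sum_filter_not univ (fun S : Finset (Fin n) => S = ∅)
      (fun S => fhat p g S ^ 2)]
  have h1 : univ.filter (fun S : Finset (Fin n) => S = ∅) = {∅} := by
    ext T; simp
  rw [h1, Finset.sum_singleton]
  simp only [ne_eq]
  ring

/-- For a random permutation `Π` drawn from a distribution `q` supported on `Sym(f)`: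
the level-`k` Fourier weight of the restriction `f_A` equals
`Σ_{|S|=k} f̂(S)² · Pr(Π(S) ⊆ A)`, and consequently
`Var(f_A) = Σ_{S ≠ ∅} f̂(S)² · Pr(Π(S) ⊆ A)`. -/
theorem stmt3 (n : ℕ) (p : ℝ) (hp0 : 0 < p) (hp1 : p < 1)
    (f : (Fin n → Bool) → ℝ) (A : Finset (Fin n))
    (q : Equiv.Perm (Fin n) → ℝ)
    (hq0 : ∀ π, 0 ≤ q π) (hq1 : ∑ π : Equiv.Perm (Fin n), q π = 1)
    (hsupp : ∀ π : Equiv.Perm (Fin n), q π ≠ 0 →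
      ∀ x : Fin n → Bool, f (fun i => x (π.symm i)) = f x)
    (k : ℕ) (hk : k ≤ n) :
    ((∑ S ∈ univ.filter (fun S : Finset (Fin n) => S.card = k),
        fhat p (restrictAvg p A f) S ^ 2)
      = ∑ S ∈ univ.filter (fun S : Finset (Fin n) => S.card = k),
          fhat p f S ^ 2 *
            (∑ π : Equiv.Perm (Fin n), q π * (if S.image π ⊆ A then (1 : ℝ) else 0)))
    ∧ (pexp p (fun x => restrictAvg p A f x ^ 2) - (pexp p (restrictAvg p A f)) ^ 2
      = ∑ S ∈ univ.filter (fun S : Finset (Fin n) => S ≠ ∅),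
          fhat p f S ^ 2 *
            (∑ π : Equiv.Perm (Fin n), q π * (if S.image π ⊆ A then (1 : ℝ) else 0))) := by
  have hsq : ∀ S : Finset (Fin n),
      fhat p (restrictAvg p A f) S ^ 2
        = fhat p f S ^ 2 * (if S ⊆ A then (1:ℝ) else 0) := by
    intro S
    rw [fhat_restrict hp0 hp1 A f S]
    split <;> simp
  constructor
  · rw [sym_sum p f A q hq1 hsupp (fun S => S.card = k)
      (fun π S => by show (S.image π).card = k ↔ S.card = k
                     rw [Finset.card_image_of_injective _ π.injective])]
    exact Finset.sum_congr rfl fun S _ => hsq S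
  · rw [sym_sum p f A q hq1 hsupp (fun S => S ≠ ∅)
      (fun π S => by show S.image π ≠ ∅ ↔ S ≠ ∅
                     simp [Finset.image_eq_empty])]
    rw [var_eq hp0 hp1 (restrictAvg p A f)]
    exact Finset.sum_congr rfl fun S _ => hsq S
end

section
/- Let n = 2^m − 1, identify [n] with the nonzero elements of F_2^m, and let A correspond to the nonzero elements of a fixed (m−ℓ)-dimensional subspace of F_2^m. If Π is induced by a uniformly random invertible linear transformation in GL(m,2), then for any nonempty S ⊆ [n], Pr(Π(S) ⊆ A ∪ {0}) ≤ 2^{−ℓ·dim(S)}, where dim(S) is the dimension of the smallest linear subspace of F_2^m containing S. -/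
open Finset

/-- Any two linearly independent families of the same finite size in a
finite-dimensional vector space are related by an automorphism. -/
lemma exists_linearEquiv_map {K V : Type*} [Field K] [AddCommGroup V] [Module K V]
    [FiniteDimensional K V] {d : ℕ} {v w : Fin d → V}
    (hv : LinearIndependent K v) (hw : LinearIndependent K w) :
    ∃ e : V ≃ₗ[K] V, ∀ i, e (v i) = w i := by
  obtain ⟨P', hP⟩ := (Submodule.span K (Set.range v)).exists_isCompl
  obtain ⟨Q', hQ⟩ := (Submodule.span K (Set.range w)).exists_isCompl
  have hrv : Module.finrank K (Submodule.span K (Set.range v)) = d := by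
    rw [finrank_span_eq_card hv, Fintype.card_fin]
  have hrw : Module.finrank K (Submodule.span K (Set.range w)) = d := by
    rw [finrank_span_eq_card hw, Fintype.card_fin]
  have hPQ : Module.finrank K Q' = Module.finrank K P' := by
    have h1 := Submodule.finrank_add_eq_of_isCompl hP
    have h2 := Submodule.finrank_add_eq_of_isCompl hQ
    omega
  let bp : Module.Basis (Fin d) K _ := Module.Basis.span hv
  let bq : Module.Basis (Fin d) K _ := Module.Basis.span hw
  let bP' := Module.finBasis K P'
  let bQ' := (Module.finBasis K Q').reindex (finCongr hPQ)
  let Bv := (bp.prod bP').map (Submodule.prodEquivOfIsCompl _ P' hP)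
  let Bw := (bq.prod bQ').map (Submodule.prodEquivOfIsCompl _ Q' hQ)
  refine ⟨Bv.equiv Bw (Equiv.refl _), fun i => ?_⟩
  have hv' : Bv (Sum.inl i) = v i := by
    simp only [Bv, Module.Basis.map_apply, Module.Basis.prod_apply, Sum.elim_inl]
    change ((bp i : _) : V) + ((0 : P') : V) = v i
    simp [bp, Module.Basis.span_apply hv i]
  have hw' : Bw (Sum.inl i) = w i := by
    simp only [Bw, Module.Basis.map_apply, Module.Basis.prod_apply, Sum.elim_inl]
    change ((bq i : _) : V) + ((0 : Q') : V) = w i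
    simp [bq, Module.Basis.span_apply hw i]
  rw [← hv', Module.Basis.equiv_apply, Equiv.refl_apply, hw']

lemma exists_GL_map {K : Type*} [Field K] {m d : ℕ} {v w : Fin d → (Fin m → K)}
    (hv : LinearIndependent K v) (hw : LinearIndependent K w) :
    ∃ g : Matrix.GeneralLinearGroup (Fin m) K,
      ∀ i, (g : Matrix (Fin m) (Fin m) K).mulVec (v i) = w i := by
  obtain ⟨e, he⟩ := exists_linearEquiv_map hv hw
  refine ⟨⟨LinearMap.toMatrix' (e : (Fin m → K) →ₗ[K] (Fin m → K)),
    LinearMap.toMatrix' (e.symm : (Fin m → K) →ₗ[K] (Fin m → K)), ?_, ?_⟩, fun i => ?_⟩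
  · rw [← LinearMap.toMatrix'_comp]
    have : (e : (Fin m → K) →ₗ[K] (Fin m → K)).comp
        (e.symm : (Fin m → K) →ₗ[K] (Fin m → K)) = LinearMap.id := by
      ext x; simp
    rw [this, LinearMap.toMatrix'_id]
  · rw [← LinearMap.toMatrix'_comp]
    have : (e.symm : (Fin m → K) →ₗ[K] (Fin m → K)).comp
        (e : (Fin m → K) →ₗ[K] (Fin m → K)) = LinearMap.id := by
      ext x; simp
    rw [this, LinearMap.toMatrix'_id]
  · show (LinearMap.toMatrix' (e : (Fin m → K) →ₗ[K] (Fin m → K))).mulVec (v i) = w i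
    rw [← Matrix.toLin'_apply, Matrix.toLin'_toMatrix']
    exact he i

set_option maxHeartbeats 2000000 in
open Classical in
/-- Let `A ∪ {0}` be a fixed `(m−ℓ)`-dimensional subspace `W` of `F_2^m` and let `S` be a
nonempty set of nonzero vectors. For a uniformly random `g ∈ GL(m,2)`,
`Pr(g(S) ⊆ W) ≤ 2^{−ℓ·dim(S)}`, where `dim(S)` is the dimension of the span of `S`. -/
theorem stmt6 (m ℓ : ℕ) (hl : ℓ ≤ m)
    (W : Submodule (ZMod 2) (Fin m → ZMod 2))
    (hW : Module.finrank (ZMod 2) W = m - ℓ)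
    (S : Finset (Fin m → ZMod 2)) (hS : S.Nonempty)
    (h0 : (0 : Fin m → ZMod 2) ∉ S) :
    ((univ.filter (fun g : Matrix.GeneralLinearGroup (Fin m) (ZMod 2) =>
          ∀ x ∈ S, (g : Matrix (Fin m) (Fin m) (ZMod 2)).mulVec x ∈ W)).card : ℝ)
        / (Fintype.card (Matrix.GeneralLinearGroup (Fin m) (ZMod 2)) : ℝ)
      ≤ (2 : ℝ) ^
          (-((ℓ * Module.finrank (ZMod 2)
              (Submodule.span (ZMod 2) (S : Set (Fin m → ZMod 2)))) : ℤ)) := by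
  classical
  set U : Submodule (ZMod 2) (Fin m → ZMod 2) :=
    Submodule.span (ZMod 2) (S : Set (Fin m → ZMod 2)) with hU
  set d : ℕ := Module.finrank (ZMod 2) U with hd
  have hVrank : Module.finrank (ZMod 2) (Fin m → ZMod 2) = m := by
    simp [Module.finrank_fintype_fun_eq_card]
  have hdm : d ≤ m := by
    have h := Submodule.finrank_le U
    rwa [hVrank] at h
  let b : Module.Basis (Fin d) (ZMod 2) U := Module.finBasis (ZMod 2) U
  let v : Fin d → (Fin m → ZMod 2) := fun i => ((b i : U) : Fin m → ZMod 2)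
  have hv : LinearIndependent (ZMod 2) v :=
    b.linearIndependent.map' U.subtype (Submodule.ker_subtype U)
  have hUspan : Submodule.span (ZMod 2) (Set.range v) = U := by
    have hr : Set.range v = (U.subtype '' Set.range b) := by
      ext x; simp [v, Set.range_comp]
    rw [hr, ← Submodule.map_span, b.span_eq, Submodule.map_top, Submodule.range_subtype]
  -- condition equivalence
  have hcond : ∀ g : Matrix.GeneralLinearGroup (Fin m) (ZMod 2),
      (∀ x ∈ S, (g : Matrix (Fin m) (Fin m) (ZMod 2)).mulVec x ∈ W) ↔
      (∀ i, (g : Matrix (Fin m) (Fin m) (ZMod 2)).mulVec (v i) ∈ W) := by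
    intro g
    have hker : ∀ (P : Prop), P → P := fun _ h => h
    constructor
    · intro h i
      have hle : U ≤ W.comap ((g : Matrix (Fin m) (Fin m) (ZMod 2)).mulVecLin) := by
        rw [hU, Submodule.span_le]
        intro x hx
        simpa [Matrix.mulVecLin_apply] using h x hx
      have hvU : v i ∈ U := (b i).2
      simpa [Matrix.mulVecLin_apply] using hle hvU
    · intro h x hx
      have hle : Submodule.span (ZMod 2) (Set.range v) ≤
          W.comap ((g : Matrix (Fin m) (Fin m) (ZMod 2)).mulVecLin) := by
        rw [Submodule.span_le]
        rintro _ ⟨i, rfl⟩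
        simpa [Matrix.mulVecLin_apply] using h i
      rw [hUspan] at hle
      have hxU : x ∈ U := Submodule.subset_span hx
      simpa [Matrix.mulVecLin_apply] using hle hxU
  -- the tuple map
  set Φ : Matrix.GeneralLinearGroup (Fin m) (ZMod 2) → (Fin d → (Fin m → ZMod 2)) :=
    fun g i => (g : Matrix (Fin m) (Fin m) (ZMod 2)).mulVec (v i) with hΦ
  have hΦli : ∀ g, LinearIndependent (ZMod 2) (Φ g) := by
    intro g
    have hinj : Function.Injective
        ((g : Matrix (Fin m) (Fin m) (ZMod 2)).mulVecLin) := by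
      apply Function.LeftInverse.injective
        (g := ((↑g⁻¹ : Matrix (Fin m) (Fin m) (ZMod 2)).mulVecLin))
      intro x
      simp only [Matrix.mulVecLin_apply, Matrix.mulVec_mulVec]
      rw [Matrix.coe_units_inv, Matrix.nonsing_inv_mul _ (Matrix.isUnit_iff_isUnit_det _ |>.mp g.isUnit), Matrix.one_mulVec]
    have := hv.map' ((g : Matrix (Fin m) (Fin m) (ZMod 2)).mulVecLin)
      (LinearMap.ker_eq_bot.mpr hinj)
    exact this
  -- constant fibers
  have hmulv : ∀ (g h : Matrix.GeneralLinearGroup (Fin m) (ZMod 2)),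
      Φ (g * h) = fun i => (g : Matrix (Fin m) (Fin m) (ZMod 2)).mulVec (Φ h i) := by
    intro g h
    funext i
    simp [hΦ, Matrix.mulVec_mulVec]
  have hfiber : ∀ w : Fin d → (Fin m → ZMod 2), LinearIndependent (ZMod 2) w →
      (univ.filter (fun g => Φ g = w)).card = (univ.filter (fun g => Φ g = v)).card := by
    intro w hw
    obtain ⟨g₀, hg₀⟩ := exists_GL_map hv hw
    have hg₀' : Φ g₀ = w := funext hg₀
    refine Finset.card_nbij' (fun g => g₀⁻¹ * g) (fun g => g₀ * g) ?_ ?_ ?_ ?_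
    · intro g hg
      rw [Finset.mem_coe, Finset.mem_filter] at hg ⊢
      refine ⟨Finset.mem_univ _, ?_⟩
      rw [hmulv, hg.2, ← hg₀']
      funext i
      rw [hΦ]
      simp [Matrix.mulVec_mulVec, Matrix.coe_units_inv,
        Matrix.nonsing_inv_mul _ (Matrix.isUnit_iff_isUnit_det _ |>.mp g₀.isUnit),
        Matrix.one_mulVec]
    · intro g hg
      rw [Finset.mem_coe, Finset.mem_filter] at hg ⊢
      refine ⟨Finset.mem_univ _, ?_⟩
      rw [hmulv, hg.2]
      exact hg₀'
    · intro g _; group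
    · intro g _; group
  -- the two counts
  set N : Finset (Fin d → (Fin m → ZMod 2)) :=
    univ.filter (fun w => LinearIndependent (ZMod 2) w) with hN
  set T : Finset (Fin d → (Fin m → ZMod 2)) :=
    univ.filter (fun w => LinearIndependent (ZMod 2) w ∧ ∀ i, w i ∈ W) with hT
  set c : ℕ := (univ.filter (fun g => Φ g = v)).card with hc
  have hGLcard : Fintype.card (Matrix.GeneralLinearGroup (Fin m) (ZMod 2)) = N.card * c := by
    have h1 := Finset.card_eq_sum_card_fiberwise
      (f := Φ) (s := univ) (t := N) (fun g _ => by
        rw [hN, Finset.mem_coe, Finset.mem_filter]; exact ⟨Finset.mem_univ _, hΦli g⟩)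
    rw [← Finset.card_univ, h1]
    rw [Finset.sum_congr rfl (fun w hw => ?_), Finset.sum_const, smul_eq_mul]
    rw [hN, Finset.mem_filter] at hw
    exact hfiber w hw.2
  have hc_pos : 0 < c := by
    rw [hc]
    refine Finset.card_pos.mpr ⟨1, ?_⟩
    rw [Finset.mem_filter]
    refine ⟨Finset.mem_univ _, funext fun i => ?_⟩
    rw [hΦ]
    simp [Matrix.one_mulVec]
  have hfiltcard : (univ.filter (fun g : Matrix.GeneralLinearGroup (Fin m) (ZMod 2) =>
      ∀ x ∈ S, (g : Matrix (Fin m) (Fin m) (ZMod 2)).mulVec x ∈ W)).card = T.card * c := by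
    have heq : (univ.filter (fun g : Matrix.GeneralLinearGroup (Fin m) (ZMod 2) =>
        ∀ x ∈ S, (g : Matrix (Fin m) (Fin m) (ZMod 2)).mulVec x ∈ W)) =
        univ.filter (fun g => Φ g ∈ T) := by
      ext g
      simp only [Finset.mem_filter, Finset.mem_univ, true_and, hT, hΦ]
      rw [hcond g]
      exact ⟨fun h => ⟨hΦli g, h⟩, fun h => h.2⟩
    rw [heq]
    have h1 := Finset.card_eq_sum_card_fiberwise
      (f := Φ) (s := univ.filter (fun g => Φ g ∈ T)) (t := T)
      (fun g hg => (Finset.mem_filter.mp hg).2)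
    rw [h1]
    rw [Finset.sum_congr rfl (fun w hw => ?_), Finset.sum_const, smul_eq_mul]
    rw [Finset.filter_filter]
    have : (univ.filter (fun g => Φ g ∈ T ∧ Φ g = w)) = univ.filter (fun g => Φ g = w) := by
      ext g
      simp only [Finset.mem_filter, Finset.mem_univ, true_and, and_iff_right_iff_imp]
      intro h; rw [h]; exact hw
    rw [this]
    rw [hT, Finset.mem_filter] at hw
    exact hfiber w hw.2.1
  have hNcard : N.card = ∏ i : Fin d, (2^m - 2^(i:ℕ)) := by
    have h2 := card_linearIndependent (K := ZMod 2) (V := Fin m → ZMod 2) (k := d)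
      (by rw [hVrank]; exact hdm)
    rw [ZMod.card, hVrank] at h2
    rw [hN, ← Fintype.card_subtype, ← Nat.card_eq_fintype_card, h2]
  have hTcard : T.card = Nat.card {s : Fin d → W // LinearIndependent (ZMod 2) s} := by
    rw [hT, ← Fintype.card_subtype, ← Nat.card_eq_fintype_card]
    apply Nat.card_congr
    refine ⟨fun w => ⟨fun i => ⟨w.1 i, w.2.2 i⟩, ?_⟩,
      fun s => ⟨fun i => (s.1 i : Fin m → ZMod 2),
        ⟨s.2.map' W.subtype (Submodule.ker_subtype W), fun i => (s.1 i).2⟩⟩, ?_, ?_⟩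
    · exact LinearIndependent.of_comp W.subtype w.2.1
    · intro w; apply Subtype.ext; rfl
    · intro s; apply Subtype.ext; funext i; apply Subtype.ext; rfl
  have hN_pos : 0 < N.card := by
    refine Finset.card_pos.mpr ⟨v, ?_⟩
    rw [hN, Finset.mem_filter]; exact ⟨Finset.mem_univ _, hv⟩
  have key : (T.card : ℝ) ≤ (2:ℝ) ^ (-((ℓ * d : ℕ) : ℤ)) * N.card := by
    by_cases hdW : d ≤ m - ℓ
    · have hTval : T.card = ∏ i : Fin d, (2^(m-ℓ) - 2^(i:ℕ)) := by
        have h3 := card_linearIndependent (K := ZMod 2) (V := W) (k := d)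
          (by rw [hW]; exact hdW)
        rw [ZMod.card, hW] at h3
        rw [hTcard, h3]
      have hcastT : ((∏ i : Fin d, (2^(m-ℓ) - 2^(i:ℕ)) : ℕ) : ℝ)
          = ∏ i : Fin d, ((2:ℝ)^(m-ℓ) - 2^(i:ℕ)) := by
        rw [Nat.cast_prod]
        refine Finset.prod_congr rfl (fun i _ => ?_)
        rw [Nat.cast_sub (Nat.pow_le_pow_right (by norm_num) (le_of_lt (lt_of_lt_of_le i.2 hdW)))]
        push_cast; ring
      have hcastN : ((∏ i : Fin d, (2^m - 2^(i:ℕ)) : ℕ) : ℝ)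
          = ∏ i : Fin d, ((2:ℝ)^m - 2^(i:ℕ)) := by
        rw [Nat.cast_prod]
        refine Finset.prod_congr rfl (fun i _ => ?_)
        rw [Nat.cast_sub (Nat.pow_le_pow_right (by norm_num) (le_of_lt (lt_of_lt_of_le i.2 hdm)))]
        push_cast; ring
      rw [hTval, hNcard, hcastT, hcastN]
      have hfac : ∀ i : Fin d, (2:ℝ)^(m-ℓ) - 2^(i:ℕ)
          ≤ (2:ℝ) ^ (-(ℓ:ℤ)) * ((2:ℝ)^m - 2^(i:ℕ)) := by
        intro i
        rw [zpow_neg, zpow_natCast, inv_mul_eq_div, le_div_iff₀ (by positivity)]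
        have h1 : (2:ℝ)^(m-ℓ) * 2^ℓ = 2^m := by
          rw [← pow_add, Nat.sub_add_cancel hl]
        have h2 : (2:ℝ)^(i:ℕ) ≤ 2^(i:ℕ) * 2^ℓ := by
          nlinarith [one_le_pow₀ (by norm_num : (1:ℝ) ≤ 2) (n := ℓ), pow_pos (by norm_num : (0:ℝ) < 2) (i:ℕ)]
        nlinarith [pow_pos (by norm_num : (0:ℝ) < 2) (i:ℕ)]
      calc ∏ i : Fin d, ((2:ℝ)^(m-ℓ) - 2^(i:ℕ))
          ≤ ∏ i : Fin d, ((2:ℝ) ^ (-(ℓ:ℤ)) * ((2:ℝ)^m - 2^(i:ℕ))) := by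
            refine Finset.prod_le_prod (fun i _ => ?_) (fun i _ => hfac i)
            have : (2:ℝ)^(i:ℕ) ≤ 2^(m-ℓ) :=
              pow_le_pow_right₀ (by norm_num) (le_of_lt (lt_of_lt_of_le i.2 hdW))
            linarith
        _ = (2:ℝ) ^ (-((ℓ * d : ℕ) : ℤ)) * ∏ i : Fin d, ((2:ℝ)^m - 2^(i:ℕ)) := by
            rw [Finset.prod_mul_distrib, Finset.prod_const, Finset.card_univ, Fintype.card_fin]
            congr 1
            rw [← zpow_natCast ((2:ℝ) ^ (-(ℓ:ℤ))) d, ← zpow_mul]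
            congr 1
            push_cast; ring
    · have : IsEmpty {s : Fin d → W // LinearIndependent (ZMod 2) s} := by
        refine ⟨fun s => hdW ?_⟩
        have h4 := s.2.fintype_card_le_finrank
        rw [hW] at h4
        simpa using h4
      rw [hTcard, Nat.card_of_isEmpty, Nat.cast_zero]
      positivity
  have hc0 : ((c:ℝ)) ≠ 0 := Nat.cast_ne_zero.mpr (Nat.pos_iff_ne_zero.mp hc_pos)
  rw [hfiltcard, hGLcard]
  push_cast
  rw [mul_div_mul_right _ _ hc0]
  rw [div_le_iff₀ (by exact_mod_cast hN_pos)]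
  exact_mod_cast key
end

section
/- Let f : {0,1}^n → {0,1} be a boolean function, let X have i.i.d. Bernoulli(p) coordinates, let α = E[f(X)] and λ = min{p, 1−p}. Then for any ε ∈ (0,1), the sum over S ⊆ [n] with |S| ≤ (1−ε)·ln(α)/ln(λ) of f̂(S)² is at most α^{2ε/(1+λ)}. In particular, taking ε = 7/8, the sum over S with |S| ≤ (1/8)·ln(α)/ln(λ) of f̂(S)² is at most α^{7/6}. -/
open Finset

namespace LevelK

noncomputable def ch (p : ℝ) (b : Bool) : ℝ :=
  if b then -Real.sqrt ((1 - p) / p) else Real.sqrt (p / (1 - p))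

noncomputable def mu (p : ℝ) (b : Bool) : ℝ := if b then p else 1 - p

variable {p : ℝ}

lemma mu_pos (hp0 : 0 < p) (hp1 : p < 1) (b : Bool) : 0 < mu p b := by
  cases b <;> simp [mu] <;> linarith

lemma sum_mu : mu p true + mu p false = 1 := by simp [mu]

lemma sqrt_mul_sqrt (hp0 : 0 < p) (hp1 : p < 1) :
    Real.sqrt ((1 - p) / p) * Real.sqrt (p / (1 - p)) = 1 := by
  have h1p : (0:ℝ) < 1 - p := by linarith
  rw [← Real.sqrt_mul (by positivity)]
  rw [show (1 - p) / p * (p / (1 - p)) = 1 by field_simp]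
  exact Real.sqrt_one

lemma mul_sqrt1 (hp0 : 0 < p) (hp1 : p < 1) :
    p * Real.sqrt ((1 - p) / p) = Real.sqrt (p * (1 - p)) := by
  have h1p : (0:ℝ) < 1 - p := by linarith
  rw [show p * Real.sqrt ((1-p)/p) = Real.sqrt (p^2) * Real.sqrt ((1-p)/p) by
        rw [Real.sqrt_sq hp0.le],
      ← Real.sqrt_mul (by positivity)]
  congr 1; field_simp

lemma mul_sqrt2 (hp0 : 0 < p) (hp1 : p < 1) :
    (1 - p) * Real.sqrt (p / (1 - p)) = Real.sqrt (p * (1 - p)) := by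
  have h1p : (0:ℝ) < 1 - p := by linarith
  rw [show (1-p) * Real.sqrt (p/(1-p)) = Real.sqrt ((1-p)^2) * Real.sqrt (p/(1-p)) by
        rw [Real.sqrt_sq (by linarith)],
      ← Real.sqrt_mul (by positivity)]
  congr 1; field_simp

lemma sum_mu_ch (hp0 : 0 < p) (hp1 : p < 1) :
    mu p true * ch p true + mu p false * ch p false = 0 := by
  simp only [mu, ch, eq_self_iff_true, if_true, Bool.false_eq_true, if_false, mul_neg]
  rw [mul_sqrt1 hp0 hp1, mul_sqrt2 hp0 hp1]; ring

lemma ch_sq_t (hp0 : 0 < p) (hp1 : p < 1) : ch p true ^ 2 = (1 - p) / p := by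
  have h1p : (0:ℝ) < 1 - p := by linarith
  simp only [ch, eq_self_iff_true, if_true]
  rw [neg_sq, Real.sq_sqrt (by positivity : (0:ℝ) ≤ (1-p)/p)]

lemma ch_sq_f (hp0 : 0 < p) (hp1 : p < 1) : ch p false ^ 2 = p / (1 - p) := by
  have h1p : (0:ℝ) < 1 - p := by linarith
  simp only [ch, Bool.false_eq_true, if_false]
  rw [Real.sq_sqrt (by positivity : (0:ℝ) ≤ p/(1-p))]

lemma sum_mu_ch_sq (hp0 : 0 < p) (hp1 : p < 1) :
    mu p true * ch p true ^ 2 + mu p false * ch p false ^ 2 = 1 := by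
  have h1p : (0:ℝ) < 1 - p := by linarith
  rw [ch_sq_t hp0 hp1, ch_sq_f hp0 hp1]
  simp only [mu, eq_self_iff_true, if_true, Bool.false_eq_true, if_false]
  field_simp
  ring

lemma ch_t_mul_ch_f (hp0 : 0 < p) (hp1 : p < 1) :
    ch p true * ch p false = -1 := by
  simp only [ch, eq_self_iff_true, if_true, Bool.false_eq_true, if_false, neg_mul]
  rw [sqrt_mul_sqrt hp0 hp1]

lemma one_bit_quad (hp0 : 0 < p) (hp1 : p < 1) (c A B : ℝ) :
    mu p true * ((1 + c * A * ch p true) * (1 + c * ch p true * B))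
      + mu p false * ((1 + c * A * ch p false) * (1 + c * ch p false * B))
      = 1 + c ^ 2 * A * B := by
  have h1 := sum_mu_ch (p := p) hp0 hp1
  have h2 := sum_mu_ch_sq (p := p) hp0 hp1
  have h0 : mu p true + mu p false = 1 := sum_mu
  linear_combination (c*A + c*B) * h1 + (c^2*A*B) * h2 + h0

end LevelK

namespace LevelK

variable {n : ℕ}

lemma sum_succ (g : (Fin (n+1) → Bool) → ℝ) :
    ∑ x : Fin (n+1) → Bool, g x
      = ∑ b : Bool, ∑ y : Fin n → Bool, g (Fin.cons b y) := by
  rw [← (Fin.consEquiv (fun _ : Fin (n+1) => Bool)).sum_comp g]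
  rw [Fintype.sum_prod_type]
  rfl

lemma wt_cons (b : Bool) (y : Fin n → Bool) :
    wt p (Fin.cons b y : Fin (n+1) → Bool) = mu p b * wt p y := by
  unfold wt
  rw [Fin.prod_univ_succ]
  simp [Fin.cons_succ, mu]

lemma wt_pos (hp0 : 0 < p) (hp1 : p < 1) (x : Fin n → Bool) : 0 < wt p x := by
  unfold wt
  apply Finset.prod_pos
  intro i _
  cases x i <;> simp <;> linarith

/-- product kernel -/
noncomputable def Kk (p c : ℝ) {n : ℕ} (x y : Fin n → Bool) : ℝ :=
  ∏ i, (1 + c * ch p (x i) * ch p (y i))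

lemma Kk_zero (p c : ℝ) (x y : Fin 0 → Bool) : Kk p c x y = 1 := by
  simp [Kk]

lemma Kk_cons (p c : ℝ) (b b' : Bool) (y y' : Fin n → Bool) :
    Kk p c (Fin.cons b y : Fin (n+1) → Bool) (Fin.cons b' y')
      = (1 + c * ch p b * ch p b') * Kk p c y y' := by
  unfold Kk
  rw [Fin.prod_univ_succ]
  simp [Fin.cons_succ]

lemma Kk_nonneg (hp0 : 0 < p) (hp1 : p < 1) {c : ℝ} (hc0 : 0 ≤ c) (hc1 : c ≤ 1)
    (x y : Fin n → Bool) : 0 ≤ Kk p c x y := by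
  apply Finset.prod_nonneg
  intro i _
  rcases Bool.dichotomy (x i) with h | h <;> rcases Bool.dichotomy (y i) with h' | h' <;>
    rw [h, h']
  · nlinarith [ch_sq_f hp0 hp1, sq_nonneg (ch p false), mul_self_nonneg (c * ch p false * ch p false)]
  · have hm : ch p false * ch p true = -1 := by
      rw [mul_comm]; exact ch_t_mul_ch_f hp0 hp1
    nlinarith [hm]
  · nlinarith [ch_t_mul_ch_f hp0 hp1]
  · nlinarith [sq_nonneg (ch p true), mul_self_nonneg (c * ch p true * ch p true)]

/-- semigroup property -/
lemma Kk_comp (hp0 : 0 < p) (hp1 : p < 1) (c : ℝ) :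
    ∀ (n : ℕ) (x z : Fin n → Bool),
      ∑ y : Fin n → Bool, wt p y * (Kk p c x y * Kk p c y z) = Kk p (c^2) x z := by
  intro n
  induction n with
  | zero =>
      intro x z
      rw [show (∑ y : Fin 0 → Bool, wt p y * (Kk p c x y * Kk p c y z))
            = wt p (finZeroElim ∘ Fin.elim0) * (Kk p c x (finZeroElim ∘ Fin.elim0) * Kk p c (finZeroElim ∘ Fin.elim0) z) from
          Fintype.sum_unique _]
      simp [Kk, wt]
  | succ m ih =>
      intro x z
      rw [← Fin.cons_self_tail x, ← Fin.cons_self_tail z, sum_succ]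
      have : ∀ b : Bool, ∀ y : Fin m → Bool,
          wt p (Fin.cons b y : Fin (m+1) → Bool) *
            (Kk p c (Fin.cons (x 0) (Fin.tail x) : Fin (m+1) → Bool) (Fin.cons b y) *
             Kk p c (Fin.cons b y : Fin (m+1) → Bool) (Fin.cons (z 0) (Fin.tail z)))
          = (mu p b * ((1 + c * ch p (x 0) * ch p b) * (1 + c * ch p b * ch p (z 0)))) *
            (wt p y * (Kk p c (Fin.tail x) y * Kk p c y (Fin.tail z))) := by
        intro b y
        rw [wt_cons, Kk_cons, Kk_cons]
        ring
      simp only [this]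
      rw [Fintype.sum_bool]
      rw [← Finset.mul_sum, ← Finset.mul_sum, ← add_mul, ih (Fin.tail x) (Fin.tail z)]
      rw [Kk_cons]
      rw [one_bit_quad hp0 hp1]

end LevelK

namespace LevelK

variable {n : ℕ}

lemma chi_eq (S : Finset (Fin n)) (x : Fin n → Bool) :
    chi p S x = ∏ i ∈ S, ch p (x i) := rfl

lemma fhat_eq (f : (Fin n → Bool) → ℝ) (S : Finset (Fin n)) :
    fhat p f S = ∑ x : Fin n → Bool, wt p x * f x * chi p S x := by
  simp [fhat, pexp, mul_assoc]

lemma Kk_expand (c : ℝ) (x z : Fin n → Bool) :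
    Kk p c x z = ∑ S : Finset (Fin n), c ^ S.card * (chi p S x * chi p S z) := by
  unfold Kk
  have : ∀ i : Fin n, (1 + c * ch p (x i) * ch p (z i))
      = (c * ch p (x i) * ch p (z i)) + 1 := fun i => by ring
  simp only [this]
  rw [Finset.prod_add]
  rw [Finset.powerset_univ]
  apply Finset.sum_congr rfl
  intro S _
  rw [Finset.prod_const_one, mul_one, chi_eq, chi_eq]
  rw [Finset.prod_mul_distrib, Finset.prod_mul_distrib, Finset.prod_const]
  ring

lemma Kk_symm (c : ℝ) (x z : Fin n → Bool) : Kk p c x z = Kk p c z x := by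
  unfold Kk
  apply Finset.prod_congr rfl
  intro i _
  ring

noncomputable def Tk (p c : ℝ) {n : ℕ} (f : (Fin n → Bool) → ℝ) (y : Fin n → Bool) : ℝ :=
  ∑ x : Fin n → Bool, wt p x * f x * Kk p c x y

lemma Tk_sq (hp0 : 0 < p) (hp1 : p < 1) (c : ℝ) (f : (Fin n → Bool) → ℝ) :
    ∑ y : Fin n → Bool, wt p y * (Tk p c f y)^2
      = ∑ x : Fin n → Bool, ∑ z : Fin n → Bool,
          (wt p x * f x) * (wt p z * f z) * Kk p (c^2) x z := by
  have expand : ∀ y : Fin n → Bool, wt p y * (Tk p c f y)^2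
      = ∑ x : Fin n → Bool, ∑ z : Fin n → Bool,
          (wt p x * f x) * (wt p z * f z) * (wt p y * (Kk p c x y * Kk p c y z)) := by
    intro y
    rw [sq, Tk, Finset.sum_mul_sum]
    rw [Finset.mul_sum]
    apply Finset.sum_congr rfl; intro x _
    rw [Finset.mul_sum]
    apply Finset.sum_congr rfl; intro z _
    rw [Kk_symm c z y]
    ring
  simp only [expand]
  rw [Finset.sum_comm]
  apply Finset.sum_congr rfl; intro x _
  rw [Finset.sum_comm]
  apply Finset.sum_congr rfl; intro z _
  rw [← Finset.mul_sum, Kk_comp hp0 hp1]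

lemma sum_pow_fhat (c : ℝ) (f : (Fin n → Bool) → ℝ) :
    ∑ S : Finset (Fin n), c ^ S.card * fhat p f S ^ 2
      = ∑ x : Fin n → Bool, ∑ z : Fin n → Bool,
          (wt p x * f x) * (wt p z * f z) * Kk p c x z := by
  have expand : ∀ x z : Fin n → Bool, (wt p x * f x) * (wt p z * f z) * Kk p c x z
      = ∑ S : Finset (Fin n),
          c ^ S.card * ((wt p x * f x * chi p S x) * (wt p z * f z * chi p S z)) := by
    intro x z
    rw [Kk_expand, Finset.mul_sum]
    apply Finset.sum_congr rfl; intro S _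
    ring
  simp only [expand]
  conv_rhs =>
    rw [show (∑ x : Fin n → Bool, ∑ z : Fin n → Bool, ∑ S : Finset (Fin n),
          c ^ S.card * ((wt p x * f x * chi p S x) * (wt p z * f z * chi p S z)))
        = ∑ x : Fin n → Bool, ∑ S : Finset (Fin n), ∑ z : Fin n → Bool,
          c ^ S.card * ((wt p x * f x * chi p S x) * (wt p z * f z * chi p S z)) from
      Finset.sum_congr rfl fun x _ => Finset.sum_comm]
    rw [Finset.sum_comm]
  apply Finset.sum_congr rfl; intro S _
  rw [sq, fhat_eq, Finset.sum_mul_sum, Finset.mul_sum]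
  apply Finset.sum_congr rfl; intro x _
  rw [Finset.mul_sum]

end LevelK

namespace LevelK

variable {n : ℕ}

noncomputable def lam (p : ℝ) : ℝ := min p (1 - p)
noncomputable def qq (p : ℝ) : ℝ := 1 + lam p
noncomputable def rho (p : ℝ) : ℝ := lam p ^ ((2:ℝ) / (1 + lam p))
noncomputable def sg (p : ℝ) : ℝ := Real.sqrt (rho p)

lemma lam_pos (hp0 : 0 < p) (hp1 : p < 1) : 0 < lam p := by
  simp only [lam, lt_min_iff]; constructor <;> linarith

lemma lam_le_half (hp0 : 0 < p) (hp1 : p < 1) : lam p ≤ 1/2 := by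
  rcases le_total p (1-p) with h | h
  · rw [lam, min_eq_left h]; linarith
  · rw [lam, min_eq_right h]; linarith

lemma rho_pos (hp0 : 0 < p) (hp1 : p < 1) : 0 < rho p :=
  Real.rpow_pos_of_pos (lam_pos hp0 hp1) _

lemma rho_le_one (hp0 : 0 < p) (hp1 : p < 1) : rho p ≤ 1 :=
  Real.rpow_le_one (lam_pos hp0 hp1).le
    (by have := lam_le_half hp0 hp1; linarith)
    (by have := lam_pos hp0 hp1; positivity)

lemma qq_gt_one (hp0 : 0 < p) (hp1 : p < 1) : 1 < qq p := by
  have := lam_pos hp0 hp1; simp only [qq]; linarith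

lemma qq_le (hp0 : 0 < p) (hp1 : p < 1) : qq p ≤ 3/2 := by
  have := lam_le_half hp0 hp1; simp only [qq]; linarith

lemma sg_sq (hp0 : 0 < p) (hp1 : p < 1) : sg p ^ 2 = rho p :=
  Real.sq_sqrt (rho_pos hp0 hp1).le

lemma logineq (hp0 : 0 < p) (hp2 : p ≤ 1/2) :
    ((1-p)/p) ^ ((1:ℝ) - 2*p) ≤ p ^ (-(1:ℝ)/(1+p)) := by
  have h1p : (0:ℝ) < 1 - p := by linarith
  have hR : (0:ℝ) < (1-p)/p := by positivity
  have h1pp : (0:ℝ) < 1 + p := by linarith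
  rw [Real.rpow_def_of_pos hR, Real.rpow_def_of_pos hp0, Real.exp_le_exp]
  rw [Real.log_div (by linarith) hp0.ne']
  have hlp : Real.log p ≤ 0 := Real.log_nonpos hp0.le (by linarith)
  have hl1p : Real.log (1-p) ≤ 0 := Real.log_nonpos h1p.le (by linarith)
  have key : (Real.log (1-p) - Real.log p) * (1 - 2*p) * (1+p) ≤ -Real.log p := by
    nlinarith [mul_nonneg (mul_nonneg (by linarith : (0:ℝ) ≤ 1+p)
        (by linarith : (0:ℝ) ≤ 1-2*p)) (neg_nonneg.2 hl1p),
      mul_nonneg (by nlinarith : (0:ℝ) ≤ p*(1+2*p)) (neg_nonneg.2 hlp)]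
  rw [show Real.log p * (-1/(1+p)) = (-Real.log p)/(1+p) by ring, le_div_iff₀ h1pp]
  linarith

lemma Gbound (hp0 : 0 < p) (hp2 : p ≤ 1/2) {u v : ℝ} (hu : 0 < u) (hv : 0 < v)
    (hc : p*u + (1-p)*v = 1) :
    p ^ (((1:ℝ)-p)/(1+p)) ≤ (1-p) * u^(p-1) + p * v^(p-1) := by
  have h1p : (0:ℝ) < 1 - p := by linarith
  have h1pp : (0:ℝ) < 1 + p := by linarith
  have hR : (0:ℝ) < (1-p)/p := by positivity
  have g1 : (u^(p-1)) ^ ((1:ℝ)-p) * (v^(p-1)) ^ p ≤ (1-p) * u^(p-1) + p * v^(p-1) :=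
    Real.geom_mean_le_arith_mean2_weighted h1p.le hp0.le
      (Real.rpow_nonneg hu.le _) (Real.rpow_nonneg hv.le _) (by ring)
  have g2 : (u^(p-1)) ^ ((1:ℝ)-p) * (v^(p-1)) ^ p = (u^((1:ℝ)-p) * v^p) ^ (p-1) := by
    rw [← Real.rpow_mul hu.le, ← Real.rpow_mul hv.le,
      Real.mul_rpow (Real.rpow_nonneg hu.le _) (Real.rpow_nonneg hv.le _),
      ← Real.rpow_mul hu.le, ← Real.rpow_mul hv.le]
    ring_nf
  have g3 : u^((1:ℝ)-p) * v^p ≤ ((1-p)/p) ^ ((1:ℝ) - 2*p) := by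
    have amgm : ((p/(1-p))*u) ^ ((1:ℝ)-p) * (((1-p)/p)*v) ^ p
        ≤ (1-p) * ((p/(1-p))*u) + p * (((1-p)/p)*v) :=
      Real.geom_mean_le_arith_mean2_weighted h1p.le hp0.le
        (by positivity) (by positivity) (by ring)
    have hrhs : (1-p) * ((p/(1-p))*u) + p * (((1-p)/p)*v) = 1 := by
      rw [show (1-p) * ((p/(1-p))*u) = p * u by field_simp,
        show p * (((1-p)/p)*v) = (1-p) * v by field_simp]
      exact hc
    rw [hrhs] at amgm
    have hlhs : ((p/(1-p))*u) ^ ((1:ℝ)-p) * (((1-p)/p)*v) ^ p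
        = ((1-p)/p) ^ ((2:ℝ)*p-1) * (u^((1:ℝ)-p) * v^p) := by
      rw [Real.mul_rpow (by positivity) hu.le, Real.mul_rpow (by positivity) hv.le]
      have e1 : (p/(1-p)) ^ ((1:ℝ)-p) = ((1-p)/p) ^ (-((1:ℝ)-p)) := by
        rw [show p/(1-p) = ((1-p)/p)⁻¹ by rw [inv_div],
          ← Real.rpow_neg_one ((1-p)/p), ← Real.rpow_mul hR.le]
        norm_num
      rw [e1, show ((1-p)/p) ^ (-((1:ℝ)-p)) * u ^ ((1:ℝ)-p) * (((1-p)/p) ^ p * v ^ p)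
          = (((1-p)/p) ^ (-((1:ℝ)-p)) * ((1-p)/p) ^ p) * (u^((1:ℝ)-p) * v^p) by ring,
        ← Real.rpow_add hR, show -((1:ℝ)-p) + p = 2*p - 1 by ring]
    rw [hlhs] at amgm
    have h2 : ((1-p)/p) ^ ((1:ℝ)-2*p) * (((1-p)/p) ^ ((2:ℝ)*p-1) * (u ^ ((1:ℝ)-p) * v^p))
        = u ^ ((1:ℝ)-p) * v^p := by
      rw [← mul_assoc, ← Real.rpow_add hR, show (1:ℝ)-2*p+(2*p-1) = 0 by ring,
        Real.rpow_zero, one_mul]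
    calc u ^ ((1:ℝ)-p) * v^p
        = ((1-p)/p) ^ ((1:ℝ)-2*p) * (((1-p)/p) ^ ((2:ℝ)*p-1) * (u ^ ((1:ℝ)-p) * v^p)) :=
          h2.symm
      _ ≤ ((1-p)/p) ^ ((1:ℝ)-2*p) * 1 :=
          mul_le_mul_of_nonneg_left amgm (Real.rpow_nonneg hR.le _)
      _ = ((1-p)/p) ^ ((1:ℝ)-2*p) := mul_one _
  have g4 : ((((1-p)/p)) ^ ((1:ℝ)-2*p)) ^ (p-1) ≤ (u^((1:ℝ)-p) * v^p) ^ (p-1) :=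
    Real.rpow_le_rpow_of_nonpos (by positivity) g3 (by linarith)
  have g5 : p ^ (((1:ℝ)-p)/(1+p)) ≤ ((((1-p)/p)) ^ ((1:ℝ)-2*p)) ^ (p-1) := by
    have h := Real.rpow_le_rpow_of_nonpos (Real.rpow_pos_of_pos hR _)
      (logineq hp0 hp2) (by linarith : p-1 ≤ 0)
    rwa [← Real.rpow_mul hp0.le,
      show (-(1:ℝ)/(1+p))*(p-1) = ((1:ℝ)-p)/(1+p) by field_simp; ring] at h
  calc p ^ (((1:ℝ)-p)/(1+p)) ≤ ((((1-p)/p)) ^ ((1:ℝ)-2*p)) ^ (p-1) := g5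
    _ ≤ (u^((1:ℝ)-p) * v^p) ^ (p-1) := g4
    _ = (u^(p-1)) ^ ((1:ℝ)-p) * (v^(p-1)) ^ p := g2.symm
    _ ≤ (1-p) * u^(p-1) + p * v^(p-1) := g1

lemma Fnonneg (hp0 : 0 < p) (hp2 : p ≤ 1/2) {d : ℝ}
    (hd1 : 0 ≤ 1 + (1-p)*d) (hd2 : 0 ≤ 1 - p*d) :
    1 + (((1:ℝ)+p)/2) * (p ^ ((2:ℝ)/(1+p))) * (p*(1-p)) * d^2
      ≤ p * (1+(1-p)*d) ^ ((1:ℝ)+p) + (1-p) * (1-p*d) ^ ((1:ℝ)+p) := by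
  have h1p : (0:ℝ) < 1 - p := by linarith
  have h1pp : (0:ℝ) < 1 + p := by linarith
  set c : ℝ := (((1:ℝ)+p)/2) * (p ^ ((2:ℝ)/(1+p))) * (p*(1-p)) with hc
  set F : ℝ → ℝ := fun t =>
    p * (1+(1-p)*t) ^ ((1:ℝ)+p) + (1-p) * (1-p*t) ^ ((1:ℝ)+p) - 1 - c*t^2 with hF
  set F1 : ℝ → ℝ := fun t =>
    p*(1-p)*(1+p) * ((1+(1-p)*t) ^ p - (1-p*t) ^ p) - 2*c*t with hF1def
  set F2 : ℝ → ℝ := fun t =>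
    p*(1-p)*(1+p) * (p*(1-p) * (1+(1-p)*t) ^ (p-1) + p*p * (1-p*t) ^ (p-1)) - 2*c
    with hF2def
  have haff1 : ∀ t : ℝ, HasDerivAt (fun s : ℝ => 1+(1-p)*s) (1-p) t := by
    intro t
    simpa using ((hasDerivAt_id t).const_mul (1-p)).const_add 1
  have haff2 : ∀ t : ℝ, HasDerivAt (fun s : ℝ => 1-p*s) (-p) t := by
    intro t
    have := ((hasDerivAt_id t).const_mul p).const_add 1
    have h2 : HasDerivAt (fun s : ℝ => 1 - p*s) (-(p*1)) t := by
      exact ((hasDerivAt_id t).const_mul p).const_sub 1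
    simpa using h2
  have hFd : ∀ t : ℝ, HasDerivAt F (F1 t) t := by
    intro t
    have h1 : HasDerivAt (fun s : ℝ => (1+(1-p)*s) ^ ((1:ℝ)+p))
        ((1-p) * (1+p) * (1+(1-p)*t) ^ ((1:ℝ)+p-1)) t :=
      (haff1 t).rpow_const (Or.inr (by linarith))
    have h2 : HasDerivAt (fun s : ℝ => (1-p*s) ^ ((1:ℝ)+p))
        ((-p) * (1+p) * (1-p*t) ^ ((1:ℝ)+p-1)) t :=
      (haff2 t).rpow_const (Or.inr (by linarith))
    have h3 : HasDerivAt (fun s : ℝ => c*s^2) (c*(2*t)) t := by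
      simpa using (hasDerivAt_pow 2 t).const_mul c
    have := (((h1.const_mul p).add (h2.const_mul (1-p))).sub_const 1).sub h3
    convert this using 1
    · rfl
    · rfl
    · rfl
    rw [hF1def]
    simp only
    rw [show (1:ℝ)+p-1 = p by ring]
    ring
  have hF1d : ∀ t ∈ Set.Ioo (-(1-p)⁻¹) p⁻¹, HasDerivAt F1 (F2 t) t := by
    intro t ht
    have hu : (0:ℝ) < 1+(1-p)*t := by
      have := ht.1
      have h2 : (1-p)⁻¹ * (1-p) = 1 := inv_mul_cancel₀ h1p.ne'
      nlinarith [mul_lt_mul_of_pos_right this h1p]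
    have hv : (0:ℝ) < 1-p*t := by
      have := ht.2
      have h2 : p * p⁻¹ = 1 := mul_inv_cancel₀ hp0.ne'
      nlinarith [mul_lt_mul_of_pos_left this hp0]
    have h1 : HasDerivAt (fun s : ℝ => (1+(1-p)*s) ^ p)
        ((1-p) * p * (1+(1-p)*t) ^ (p-1)) t :=
      (haff1 t).rpow_const (Or.inl hu.ne')
    have h2 : HasDerivAt (fun s : ℝ => (1-p*s) ^ p)
        ((-p) * p * (1-p*t) ^ (p-1)) t :=
      (haff2 t).rpow_const (Or.inl hv.ne')
    have h3 : HasDerivAt (fun s : ℝ => 2*c*s) (2*c) t := by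
      simpa using (hasDerivAt_id t).const_mul (2*c)
    have := ((h1.sub h2).const_mul (p*(1-p)*(1+p))).sub h3
    convert this using 1
    · rfl
    · rfl
    · rfl
    rw [hF2def]
    simp only
    ring
  have hF2nn : ∀ t ∈ Set.Ioo (-(1-p)⁻¹) p⁻¹, 0 ≤ F2 t := by
    intro t ht
    have hu : (0:ℝ) < 1+(1-p)*t := by
      have := ht.1
      nlinarith [mul_lt_mul_of_pos_right this h1p, inv_mul_cancel₀ h1p.ne']
    have hv : (0:ℝ) < 1-p*t := by
      have := ht.2
      nlinarith [mul_lt_mul_of_pos_left this hp0, mul_inv_cancel₀ hp0.ne']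
    have hG := Gbound hp0 hp2 hu hv (by ring)
    have hsplit : p * p ^ (((1:ℝ)-p)/(1+p)) = p ^ ((2:ℝ)/(1+p)) := by
      nth_rewrite 1 [show p = p ^ (1:ℝ) from (Real.rpow_one p).symm]
      rw [← Real.rpow_add hp0]
      congr 1
      field_simp
      ring
    have hkey : p ^ ((2:ℝ)/(1+p))
        ≤ p * ((1-p) * (1+(1-p)*t)^(p-1) + p * (1-p*t)^(p-1)) := by
      calc p ^ ((2:ℝ)/(1+p)) = p * p ^ (((1:ℝ)-p)/(1+p)) := hsplit.symm
        _ ≤ p * ((1-p) * (1+(1-p)*t)^(p-1) + p * (1-p*t)^(p-1)) :=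
            mul_le_mul_of_nonneg_left hG hp0.le
    rw [hF2def]
    simp only
    rw [hc]
    nlinarith [mul_le_mul_of_nonneg_left hkey
      (by positivity : (0:ℝ) ≤ (1-p)*(1+p))]
  -- continuity of F1
  have hF1cont : ∀ t : ℝ, ContinuousAt F1 t := by
    intro t
    rw [hF1def]
    apply ContinuousAt.sub
    · apply ContinuousAt.mul continuousAt_const
      apply ContinuousAt.sub
      · exact ContinuousAt.rpow_const (by fun_prop) (Or.inr hp0.le)
      · exact ContinuousAt.rpow_const (by fun_prop) (Or.inr hp0.le)
    · fun_prop
  have hF10 : F1 0 = 0 := by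
    rw [hF1def]
    simp [Real.one_rpow]
  have hF0 : F 0 = 0 := by
    rw [hF]
    simp [Real.one_rpow]
  -- F1 monotone on the closed interval
  have hIcc : Set.Ioo (-(1-p)⁻¹) p⁻¹ = interior (Set.Icc (-(1-p)⁻¹) p⁻¹) :=
    (interior_Icc).symm
  have hmem0 : (0:ℝ) ∈ Set.Icc (-(1-p)⁻¹) p⁻¹ := by
    constructor
    · exact neg_nonpos.mpr (inv_nonneg.mpr h1p.le)
    · positivity
  have hmonoF1 : MonotoneOn F1 (Set.Icc (-(1-p)⁻¹) p⁻¹) := by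
    apply monotoneOn_of_deriv_nonneg (convex_Icc _ _)
      (fun t _ => (hF1cont t).continuousWithinAt)
    · intro t ht
      rw [← hIcc] at ht
      exact (hF1d t ht).differentiableAt.differentiableWithinAt
    · intro t ht
      rw [← hIcc] at ht
      rw [(hF1d t ht).deriv]
      exact hF2nn t ht
  -- conclude F d ≥ 0
  have hd1' : -(1-p)⁻¹ ≤ d := by
    have h2 : (1-p)⁻¹ * (1 + (1-p)*d) = (1-p)⁻¹ + d := by field_simp
    nlinarith [mul_nonneg (inv_pos.2 h1p).le hd1]
  have hd2' : d ≤ p⁻¹ := by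
    have h2 : p⁻¹ * (1 - p*d) = p⁻¹ - d := by field_simp
    nlinarith [mul_nonneg (inv_pos.2 hp0).le hd2]
  have hFd0 : 0 ≤ F d := by
    rcases le_total 0 d with hsign | hsign
    · have hmono : MonotoneOn F (Set.Icc 0 p⁻¹) := by
        apply monotoneOn_of_deriv_nonneg (convex_Icc _ _)
          (fun t _ => (hFd t).continuousAt.continuousWithinAt)
        · intro t _
          exact (hFd t).differentiableAt.differentiableWithinAt
        · intro t ht
          rw [interior_Icc] at ht
          rw [(hFd t).deriv]
          have htmem : t ∈ Set.Icc (-(1-p)⁻¹) p⁻¹ := by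
            constructor
            · apply le_trans hmem0.1 ht.1.le
            · exact ht.2.le
          have := hmonoF1 hmem0 htmem ht.1.le
          rw [hF10] at this
          exact this
      have := hmono (by constructor <;> [rfl; positivity]) (by exact ⟨hsign, hd2'⟩) hsign
      rwa [hF0] at this
    · have hmono : AntitoneOn F (Set.Icc (-(1-p)⁻¹) 0) := by
        apply antitoneOn_of_deriv_nonpos (convex_Icc _ _)
          (fun t _ => (hFd t).continuousAt.continuousWithinAt)
        · intro t _
          exact (hFd t).differentiableAt.differentiableWithinAt
        · intro t ht
          rw [interior_Icc] at ht
          rw [(hFd t).deriv]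
          have htmem : t ∈ Set.Icc (-(1-p)⁻¹) p⁻¹ := by
            constructor
            · exact ht.1.le
            · exact le_trans ht.2.le hmem0.2
          have := hmonoF1 htmem hmem0 ht.2.le
          rw [hF10] at this
          exact this
      have := hmono (by exact ⟨hd1', hsign⟩) (by constructor <;> [exact (neg_nonpos.2 (inv_pos.2 h1p).le); rfl]) hsign
      rwa [hF0] at this
  rw [hF] at hFd0
  simp only at hFd0
  linarith [hFd0]

lemma core (hp0 : 0 < p) (hp2 : p ≤ 1/2) {u v : ℝ} (hu : 0 ≤ u) (hv : 0 ≤ v)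
    (hc : p*u + (1-p)*v = 1) :
    1 + p ^ ((2:ℝ)/(1+p)) * (p*(1-p)*(u-v)^2)
      ≤ (p * u ^ ((1:ℝ)+p) + (1-p) * v ^ ((1:ℝ)+p)) ^ ((2:ℝ)/(1+p)) := by
  have h1p : (0:ℝ) < 1 - p := by linarith
  have h1pp : (0:ℝ) < 1 + p := by linarith
  have hu' : u = 1 + (1-p)*(u-v) := by linear_combination hc
  have hv' : v = 1 - p*(u-v) := by linear_combination hc
  have hF := Fnonneg hp0 hp2 (d := u - v) (by rw [← hu']; exact hu) (by rw [← hv']; exact hv)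
  rw [← hu', ← hv'] at hF
  set X : ℝ := p ^ ((2:ℝ)/(1+p)) * (p*(1-p)*(u-v)^2) with hX
  have hXnn : 0 ≤ X := by
    rw [hX]; positivity
  have hbern : (1 + X) ^ (((1:ℝ)+p)/2) ≤ 1 + (((1:ℝ)+p)/2) * X :=
    rpow_one_add_le_one_add_mul_self (by linarith) (by linarith) (by linarith)
  have hE : (1 + X) ^ (((1:ℝ)+p)/2)
      ≤ p * u ^ ((1:ℝ)+p) + (1-p) * v ^ ((1:ℝ)+p) := by
    apply le_trans hbern
    rw [← hu', ← hv'] at *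
    calc 1 + (((1:ℝ)+p)/2) * X
        = 1 + (((1:ℝ)+p)/2) * (p ^ ((2:ℝ)/(1+p))) * (p*(1-p)) * (u-v)^2 := by
          rw [hX]; ring
      _ ≤ p * u ^ ((1:ℝ)+p) + (1-p) * v ^ ((1:ℝ)+p) := by
          rw [hu', hv']
          rw [hu', hv'] at hF
          exact hF
  have hfin := Real.rpow_le_rpow (Real.rpow_nonneg (by linarith) _) hE
    (by positivity : (0:ℝ) ≤ 2/(1+p))
  rwa [← Real.rpow_mul (by linarith : (0:ℝ) ≤ 1 + X),
    show (((1:ℝ)+p)/2) * ((2:ℝ)/(1+p)) = 1 by field_simp, Real.rpow_one] at hfin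

lemma core2 (hp0 : 0 < p) (hp2 : p ≤ 1/2) {U V : ℝ} (hU : 0 ≤ U) (hV : 0 ≤ V) :
    (p*U + (1-p)*V)^2 + p ^ ((2:ℝ)/(1+p)) * (p*(1-p)*(U-V)^2)
      ≤ (p * U ^ ((1:ℝ)+p) + (1-p) * V ^ ((1:ℝ)+p)) ^ ((2:ℝ)/(1+p)) := by
  have h1p : (0:ℝ) < 1 - p := by linarith
  have h1pp : (0:ℝ) < 1 + p := by linarith
  have hmnn : (0:ℝ) ≤ p*U + (1-p)*V := by positivity
  rcases eq_or_lt_of_le hmnn with hm0 | hmpos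
  · -- m = 0 forces U = V = 0
    have hU0 : U = 0 := by nlinarith [mul_nonneg hp0.le hU, mul_nonneg h1p.le hV]
    have hV0 : V = 0 := by nlinarith [mul_nonneg hp0.le hU, mul_nonneg h1p.le hV]
    rw [hU0, hV0]
    rw [Real.zero_rpow (by linarith : (1:ℝ)+p ≠ 0)]
    norm_num
    rw [Real.zero_rpow (by positivity : (2:ℝ)/(1+p) ≠ 0)]
  · set m : ℝ := p*U + (1-p)*V with hm
    have hcons : p*(U/m) + (1-p)*(V/m) = 1 := by
      field_simp
      exact hm.symm
    have hcore := core hp0 hp2 (by positivity : 0 ≤ U/m) (by positivity : 0 ≤ V/m) hcons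
    have hmul := mul_le_mul_of_nonneg_left hcore (by positivity : (0:ℝ) ≤ m^2)
    have hlhs : m^2 * (1 + p ^ ((2:ℝ)/(1+p)) * (p*(1-p)*(U/m-V/m)^2))
        = m^2 + p ^ ((2:ℝ)/(1+p)) * (p*(1-p)*(U-V)^2) := by
      rw [div_sub_div_same]
      field_simp
    have hrhs : m^2 * ((p * (U/m) ^ ((1:ℝ)+p) + (1-p) * (V/m) ^ ((1:ℝ)+p)) ^ ((2:ℝ)/(1+p)))
        = (p * U ^ ((1:ℝ)+p) + (1-p) * V ^ ((1:ℝ)+p)) ^ ((2:ℝ)/(1+p)) := by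
      rw [Real.div_rpow hU hmnn, Real.div_rpow hV hmnn]
      rw [show p * (U ^ ((1:ℝ)+p) / m ^ ((1:ℝ)+p)) + (1-p) * (V ^ ((1:ℝ)+p) / m ^ ((1:ℝ)+p))
          = (p * U ^ ((1:ℝ)+p) + (1-p) * V ^ ((1:ℝ)+p)) / m ^ ((1:ℝ)+p) by ring]
      rw [Real.div_rpow (by positivity) (Real.rpow_nonneg hmnn _)]
      rw [← Real.rpow_mul hmnn, show ((1:ℝ)+p) * ((2:ℝ)/(1+p)) = 2 by field_simp,
        show ((2:ℝ) = ((2:ℕ):ℝ)) by norm_num, Real.rpow_natCast]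
      field_simp
    rw [hlhs, hrhs] at hmul
    exact hmul


/-- the two-point inequality (core analysis) -/
theorem TP (hp0 : 0 < p) (hp1 : p < 1) (a b : ℝ) :
    a^2 + rho p * b^2
      ≤ (mu p true * |a + ch p true * b| ^ qq p
          + mu p false * |a + ch p false * b| ^ qq p) ^ (2 / qq p) := by
  have hs : p * ch p true + (1-p) * ch p false = 0 := by
    have := sum_mu_ch hp0 hp1
    simpa [mu] using this
  have h1 := ch_sq_t hp0 hp1
  have h2 := ch_sq_f hp0 hp1
  have h3 := ch_t_mul_ch_f hp0 hp1
  simp only [mu, eq_self_iff_true, if_true, Bool.false_eq_true, if_false, rho, qq, lam]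
  have h1p : (0:ℝ) < 1 - p := by linarith
  set U : ℝ := a + ch p true * b with hU
  set V : ℝ := a + ch p false * b with hV
  set R : ℝ := (min p (1-p)) ^ ((2:ℝ)/(1 + min p (1-p))) with hR
  have hR0 : 0 < R := Real.rpow_pos_of_pos (lt_min hp0 h1p) _
  have hR1 : R ≤ 1 := by
    rw [hR]
    apply Real.rpow_le_one (le_of_lt (lt_min hp0 h1p))
    · rcases le_total p (1-p) with h | h
      · rw [min_eq_left h]; linarith
      · rw [min_eq_right h]; linarith
    · have : (0:ℝ) < 1 + min p (1-p) := by
        have := lt_min hp0 h1p; linarith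
      positivity
  have key1 : p*U + (1-p)*V = a := by
    rw [hU, hV]
    linear_combination b * hs
  have h1' : p * ch p true ^ 2 = 1 - p := by
    rw [h1]; field_simp
  have h2' : (1-p) * ch p false ^ 2 = p := by
    rw [h2]; field_simp
  have hch : p*(1-p)*(ch p true - ch p false)^2 = 1 := by
    linear_combination ((1-p))*h1' + p*h2' - (2*p*(1-p))*h3
  have key2 : p*(1-p)*(U-V)^2 = b^2 := by
    rw [hU, hV, show a + ch p true * b - (a + ch p false * b)
      = (ch p true - ch p false) * b by ring]
    linear_combination (b^2) * hch
  have habs : a^2 + R * b^2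
      ≤ (p*|U| + (1-p)*|V|)^2 + R * (p*(1-p)*(|U|-|V|)^2) := by
    have hab : |p*U + (1-p)*V| ≤ p*|U| + (1-p)*|V| := by
      calc |p*U + (1-p)*V| ≤ |p*U| + |(1-p)*V| := abs_add_le _ _
        _ = p*|U| + (1-p)*|V| := by
            rw [abs_mul, abs_mul, abs_of_pos hp0, abs_of_pos h1p]
    have hsq : (p*U + (1-p)*V)^2 ≤ (p*|U| + (1-p)*|V|)^2 := by
      rw [← sq_abs (p*U + (1-p)*V)]
      apply pow_le_pow_left₀ (abs_nonneg _) hab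
    have e1 : a^2 + R * b^2
        = (1-R)*(p*U + (1-p)*V)^2 + R*(p*U^2+(1-p)*V^2) := by
      rw [← key1, ← key2]; ring
    have e2 : (p*|U| + (1-p)*|V|)^2 + R * (p*(1-p)*(|U|-|V|)^2)
        = (1-R)*(p*|U| + (1-p)*|V|)^2 + R*(p*|U|^2+(1-p)*|V|^2) := by ring
    rw [e1, e2]
    have : p*U^2+(1-p)*V^2 = p*|U|^2+(1-p)*|V|^2 := by
      rw [sq_abs, sq_abs]
    rw [this]
    have := mul_le_mul_of_nonneg_left hsq (by linarith : (0:ℝ) ≤ 1-R)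
    linarith
  rcases le_total p (1-p) with hpl | hpl
  · have hlam : min p (1-p) = p := min_eq_left hpl
    have hp2 : p ≤ 1/2 := by linarith
    have hc2 := core2 hp0 hp2 (abs_nonneg U) (abs_nonneg V)
    rw [hlam] at hR ⊢
    calc a^2 + R * b^2
        ≤ (p*|U| + (1-p)*|V|)^2 + R * (p*(1-p)*(|U|-|V|)^2) := habs
      _ ≤ (p * |U| ^ ((1:ℝ)+p) + (1-p) * |V| ^ ((1:ℝ)+p)) ^ ((2:ℝ)/(1+p)) := by
          rw [hR]; exact hc2
  · have hlam : min p (1-p) = 1-p := min_eq_right hpl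
    have hp2 : 1-p ≤ 1/2 := by linarith
    have hc2 := core2 (p := 1-p) h1p hp2 (abs_nonneg V) (abs_nonneg U)
    rw [show (1:ℝ)-(1-p) = p by ring] at hc2
    rw [hlam] at hR ⊢
    calc a^2 + R * b^2
        ≤ (p*|U| + (1-p)*|V|)^2 + R * (p*(1-p)*(|U|-|V|)^2) := habs
      _ = ((1-p)*|V| + p*|U|)^2 + R * ((1-p)*p*(|V|-|U|)^2) := by ring
      _ ≤ ((1-p) * |V| ^ ((1:ℝ)+(1-p)) + p * |U| ^ ((1:ℝ)+(1-p))) ^ ((2:ℝ)/(1+(1-p))) := by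
          rw [hR]; exact hc2
      _ = (p * |U| ^ ((1:ℝ)+(1-p)) + (1-p) * |V| ^ ((1:ℝ)+(1-p))) ^ ((2:ℝ)/(1+(1-p))) := by
          rw [add_comm]



lemma mu_ch_t (hp0 : 0 < p) (hp1 : p < 1) :
    mu p true * ch p true = -Real.sqrt (p * (1-p)) := by
  simp only [mu, ch, eq_self_iff_true, if_true, mul_neg, neg_inj]
  exact mul_sqrt1 hp0 hp1

lemma mu_ch_f (hp0 : 0 < p) (hp1 : p < 1) :
    mu p false * ch p false = Real.sqrt (p * (1-p)) := by
  simp only [mu, ch, Bool.false_eq_true, if_false]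
  exact mul_sqrt2 hp0 hp1

lemma sqrt3 (hp0 : 0 < p) (hp1 : p < 1) :
    ch p true * Real.sqrt (p * (1-p)) = -(1-p) := by
  have h1p : (0:ℝ) < 1 - p := by linarith
  simp only [ch, eq_self_iff_true, if_true, neg_mul, neg_inj]
  rw [← Real.sqrt_mul (by positivity)]
  rw [show (1-p)/p * (p*(1-p)) = (1-p)^2 by field_simp]
  exact Real.sqrt_sq (by linarith)

lemma sqrt4 (hp0 : 0 < p) (hp1 : p < 1) :
    ch p false * Real.sqrt (p * (1-p)) = p := by
  have h1p : (0:ℝ) < 1 - p := by linarith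
  simp only [ch, Bool.false_eq_true, if_false]
  rw [← Real.sqrt_mul (by positivity)]
  rw [show p/(1-p) * (p*(1-p)) = p^2 by field_simp]
  exact Real.sqrt_sq hp0.le

noncomputable def lowA (p : ℝ) {n : ℕ} (f : (Fin (n+1) → Bool) → ℝ) :
    (Fin n → Bool) → ℝ :=
  fun y => p * f (Fin.cons true y) + (1-p) * f (Fin.cons false y)

noncomputable def lowD (p : ℝ) {n : ℕ} (f : (Fin (n+1) → Bool) → ℝ) :
    (Fin n → Bool) → ℝ :=
  fun y => Real.sqrt (p * (1-p)) * (f (Fin.cons false y) - f (Fin.cons true y))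

lemma f_decomp (hp0 : 0 < p) (hp1 : p < 1) (f : (Fin (n+1) → Bool) → ℝ)
    (b : Bool) (y : Fin n → Bool) :
    f (Fin.cons b y) = lowA p f y + ch p b * lowD p f y := by
  cases b
  · simp only [lowA, lowD]
    rw [show ch p false * (Real.sqrt (p*(1-p)) * (f (Fin.cons false y) - f (Fin.cons true y)))
        = (ch p false * Real.sqrt (p*(1-p))) * (f (Fin.cons false y) - f (Fin.cons true y)) by ring,
      sqrt4 hp0 hp1]
    ring
  · simp only [lowA, lowD]
    rw [show ch p true * (Real.sqrt (p*(1-p)) * (f (Fin.cons false y) - f (Fin.cons true y)))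
        = (ch p true * Real.sqrt (p*(1-p))) * (f (Fin.cons false y) - f (Fin.cons true y)) by ring,
      sqrt3 hp0 hp1]
    ring

lemma Tk_cons (hp0 : 0 < p) (hp1 : p < 1) (c : ℝ) (f : (Fin (n+1) → Bool) → ℝ)
    (b : Bool) (y : Fin n → Bool) :
    Tk p c f (Fin.cons b y)
      = Tk p c (lowA p f) y + c * ch p b * Tk p c (lowD p f) y := by
  unfold Tk
  rw [sum_succ (g := fun x => wt p x * f x * Kk p c x (Fin.cons b y))]
  rw [Fintype.sum_bool, Finset.mul_sum, ← Finset.sum_add_distrib]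
  conv_rhs => rw [← Finset.sum_add_distrib]
  apply Finset.sum_congr rfl
  intro y' _
  rw [wt_cons, wt_cons, Kk_cons, Kk_cons]
  have e1 : p * ch p true = -Real.sqrt (p * (1-p)) := by
    have := mu_ch_t hp0 hp1; simpa [mu] using this
  have e2 : (1-p) * ch p false = Real.sqrt (p * (1-p)) := by
    have := mu_ch_f hp0 hp1; simpa [mu] using this
  simp only [lowA, lowD, mu, eq_self_iff_true, if_true, Bool.false_eq_true, if_false]
  linear_combination (c * ch p b * Kk p c y' y * wt p y' * f (Fin.cons true y')) * e1 +
    (c * ch p b * Kk p c y' y * wt p y' * f (Fin.cons false y')) * e2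

lemma one_bit_sq (hp0 : 0 < p) (hp1 : p < 1) (c U V : ℝ) :
    mu p true * (U + c * ch p true * V)^2 + mu p false * (U + c * ch p false * V)^2
      = U^2 + c^2 * V^2 := by
  have h0 : mu p true + mu p false = 1 := sum_mu
  have h1 := sum_mu_ch (p := p) hp0 hp1
  have h2 := sum_mu_ch_sq (p := p) hp0 hp1
  linear_combination U^2 * h0 + 2*c*U*V * h1 + c^2*V^2 * h2

end LevelK


namespace LevelK

/-- weighted two-term Minkowski -/
lemma mink {ι : Type*} [Fintype ι] {r : ℝ} (hr : 1 ≤ r)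
    (w H1 H2 : ι → ℝ) (hw : ∀ y, 0 ≤ w y) (h1 : ∀ y, 0 ≤ H1 y) (h2 : ∀ y, 0 ≤ H2 y) :
    ∑ y, w y * (H1 y + H2 y) ^ r
      ≤ ((∑ y, w y * H1 y ^ r) ^ (1/r) + (∑ y, w y * H2 y ^ r) ^ (1/r)) ^ r := by
  have hr0 : 0 < r := by linarith
  set F1 : ι → ℝ := fun y => w y ^ (1/r) * H1 y with hF1
  set F2 : ι → ℝ := fun y => w y ^ (1/r) * H2 y with hF2
  have key : ∀ y, w y * (H1 y + H2 y) ^ r = (F1 y + F2 y) ^ r := by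
    intro y
    have hw' : (w y ^ (1/r)) ^ r = w y := by
      rw [← Real.rpow_mul (hw y), one_div, inv_mul_cancel₀ hr0.ne', Real.rpow_one]
    rw [hF1, hF2]
    simp only
    rw [← mul_add, Real.mul_rpow (Real.rpow_nonneg (hw y) _) (add_nonneg (h1 y) (h2 y)), hw']
  have keyi : ∀ (H : ι → ℝ), (∀ y, 0 ≤ H y) →
      ∑ y, (w y ^ (1/r) * H y) ^ r = ∑ y, w y * H y ^ r := by
    intro H hH
    apply Finset.sum_congr rfl
    intro y _
    rw [Real.mul_rpow (Real.rpow_nonneg (hw y) _) (hH y), ← Real.rpow_mul (hw y)]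
    rw [one_div, inv_mul_cancel₀ hr0.ne', Real.rpow_one]
  have hmk := Real.Lp_add_le_of_nonneg (s := univ) (f := F1) (g := F2) hr
    (fun y _ => mul_nonneg (Real.rpow_nonneg (hw y) _) (h1 y))
    (fun y _ => mul_nonneg (Real.rpow_nonneg (hw y) _) (h2 y))
  have hF1nn : ∀ y, 0 ≤ F1 y := fun y => mul_nonneg (Real.rpow_nonneg (hw y) _) (h1 y)
  have hF2nn : ∀ y, 0 ≤ F2 y := fun y => mul_nonneg (Real.rpow_nonneg (hw y) _) (h2 y)
  have hnn : (0:ℝ) ≤ ∑ y, (F1 y + F2 y) ^ r :=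
    Finset.sum_nonneg fun y _ => Real.rpow_nonneg (add_nonneg (hF1nn y) (hF2nn y)) _
  calc ∑ y, w y * (H1 y + H2 y) ^ r = ∑ y, (F1 y + F2 y) ^ r := by
        exact Finset.sum_congr rfl fun y _ => key y
    _ = ((∑ y, (F1 y + F2 y) ^ r) ^ (1/r)) ^ r := by
        rw [← Real.rpow_mul hnn, one_div, inv_mul_cancel₀ hr0.ne', Real.rpow_one]
    _ ≤ ((∑ y, F1 y ^ r) ^ (1/r) + (∑ y, F2 y ^ r) ^ (1/r)) ^ r := by
        apply Real.rpow_le_rpow (Real.rpow_nonneg hnn _) hmk hr0.le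
    _ = ((∑ y, w y * H1 y ^ r) ^ (1/r) + (∑ y, w y * H2 y ^ r) ^ (1/r)) ^ r := by
        rw [keyi H1 h1, keyi H2 h2]

end LevelK

namespace LevelK

variable {p : ℝ}

lemma sum_pow_succ {m : ℕ} (f : (Fin (m+1) → Bool) → ℝ) (e : ℝ) :
    ∑ x : Fin (m+1) → Bool, wt p x * |f x| ^ e
      = mu p true * ∑ y : Fin m → Bool, wt p y * |f (Fin.cons true y)| ^ e
        + mu p false * ∑ y : Fin m → Bool, wt p y * |f (Fin.cons false y)| ^ e := by
  rw [sum_succ (g := fun x => wt p x * |f x| ^ e), Fintype.sum_bool,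
    Finset.mul_sum, Finset.mul_sum]
  congr 1 <;> apply Finset.sum_congr rfl <;> intro y _ <;> rw [wt_cons] <;> ring

lemma wt_zero (x : Fin 0 → Bool) : wt p x = 1 := by simp [wt]

lemma Tk_zero (c : ℝ) (f : (Fin 0 → Bool) → ℝ) (y : Fin 0 → Bool) : Tk p c f y = f y := by
  unfold Tk
  rw [Fintype.sum_unique (fun x : Fin 0 → Bool => wt p x * f x * Kk p c x y)]
  rw [wt_zero, Kk_zero, one_mul, mul_one]
  congr 1
  exact Subsingleton.elim _ _

theorem HC (hp0 : 0 < p) (hp1 : p < 1) :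
    ∀ (n : ℕ) (f : (Fin n → Bool) → ℝ),
      ∑ y : Fin n → Bool, wt p y * (Tk p (sg p) f y)^2
        ≤ (∑ x : Fin n → Bool, wt p x * |f x| ^ qq p) ^ ((2:ℝ) / qq p) := by
  have hl0 := lam_pos hp0 hp1
  have hq1 : 1 < qq p := qq_gt_one hp0 hp1
  have hq0 : 0 < qq p := by linarith
  have hq32 : qq p ≤ 3/2 := qq_le hp0 hp1
  have hr1 : (1:ℝ) ≤ 2 / qq p := by rw [le_div_iff₀ hq0]; linarith
  have hr0 : (0:ℝ) < 2 / qq p := by positivity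
  have hrne : ((2:ℝ) / qq p) ≠ 0 := ne_of_gt hr0
  have hcollapse : ∀ t : ℝ, (|t| ^ qq p) ^ ((2:ℝ)/qq p) = t^2 := by
    intro t
    rw [← Real.rpow_mul (abs_nonneg t), mul_div_cancel₀ 2 hq0.ne',
      show ((2:ℝ) = ((2:ℕ):ℝ)) by norm_num, Real.rpow_natCast, sq_abs]
  have collapse_r : ∀ X : ℝ, 0 ≤ X → (X ^ ((2:ℝ)/qq p)) ^ (1/((2:ℝ)/qq p)) = X := by
    intro X hX
    rw [← Real.rpow_mul hX, mul_one_div, div_self hrne, Real.rpow_one]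
  intro n
  induction n with
  | zero =>
      intro f
      rw [Fintype.sum_unique (fun y : Fin 0 → Bool => wt p y * (Tk p (sg p) f y)^2),
        Fintype.sum_unique (fun x : Fin 0 → Bool => wt p x * |f x| ^ qq p)]
      rw [Tk_zero, wt_zero, one_mul, one_mul, hcollapse]
  | succ m ih =>
      intro f
      have hlin : ∀ b : Bool, ∀ y : Fin m → Bool,
          Tk p (sg p) (fun y' => f (Fin.cons b y')) y
            = Tk p (sg p) (lowA p f) y + ch p b * Tk p (sg p) (lowD p f) y := by
        intro b y
        unfold Tk
        rw [Finset.mul_sum, ← Finset.sum_add_distrib]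
        apply Finset.sum_congr rfl
        intro x _
        beta_reduce
        rw [show f (Fin.cons b x) = lowA p f x + ch p b * lowD p f x from
          f_decomp hp0 hp1 f b x]
        ring
      have hsplit : ∑ x : Fin (m+1) → Bool, wt p x * (Tk p (sg p) f x)^2
          = ∑ y : Fin m → Bool, wt p y *
              ((Tk p (sg p) (lowA p f) y)^2 + rho p * (Tk p (sg p) (lowD p f) y)^2) := by
        rw [sum_succ (g := fun x => wt p x * (Tk p (sg p) f x)^2), Fintype.sum_bool,
          ← Finset.sum_add_distrib]
        apply Finset.sum_congr rfl
        intro y _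
        rw [wt_cons, wt_cons, Tk_cons hp0 hp1, Tk_cons hp0 hp1]
        have hob := one_bit_sq hp0 hp1 (sg p)
          (Tk p (sg p) (lowA p f) y) (Tk p (sg p) (lowD p f) y)
        rw [sg_sq hp0 hp1] at hob
        linear_combination wt p y * hob
      have step1 : ∀ y : Fin m → Bool,
          (Tk p (sg p) (lowA p f) y)^2 + rho p * (Tk p (sg p) (lowD p f) y)^2
            ≤ (mu p true * |Tk p (sg p) (fun y' => f (Fin.cons true y')) y| ^ qq p
                + mu p false * |Tk p (sg p) (fun y' => f (Fin.cons false y')) y| ^ qq p)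
              ^ ((2:ℝ) / qq p) := by
        intro y
        rw [hlin true y, hlin false y]
        exact TP hp0 hp1 _ _
      have hmink := mink hr1 (fun y : Fin m → Bool => wt p y)
        (fun y => mu p true * |Tk p (sg p) (fun y' => f (Fin.cons true y')) y| ^ qq p)
        (fun y => mu p false * |Tk p (sg p) (fun y' => f (Fin.cons false y')) y| ^ qq p)
        (fun y => (wt_pos hp0 hp1 y).le)
        (fun y => mul_nonneg (mu_pos hp0 hp1 true).le (Real.rpow_nonneg (abs_nonneg _) _))
        (fun y => mul_nonneg (mu_pos hp0 hp1 false).le (Real.rpow_nonneg (abs_nonneg _) _))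
      have hMb : ∀ (b : Bool) (g : (Fin m → Bool) → ℝ),
          (∑ y : Fin m → Bool, wt p y * (mu p b * |g y| ^ qq p) ^ ((2:ℝ)/qq p))
              ^ ((1:ℝ)/(2/qq p))
            = mu p b * (∑ y : Fin m → Bool, wt p y * (g y)^2) ^ ((1:ℝ)/(2/qq p)) := by
        intro b g
        have hsum : (∑ y : Fin m → Bool, wt p y * (mu p b * |g y| ^ qq p) ^ ((2:ℝ)/qq p))
            = mu p b ^ ((2:ℝ)/qq p) * ∑ y : Fin m → Bool, wt p y * (g y)^2 := by
          rw [Finset.mul_sum]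
          apply Finset.sum_congr rfl
          intro y _
          rw [Real.mul_rpow (mu_pos hp0 hp1 b).le (Real.rpow_nonneg (abs_nonneg _) _),
            hcollapse]
          ring
        rw [hsum, Real.mul_rpow (Real.rpow_nonneg (mu_pos hp0 hp1 b).le _)
          (Finset.sum_nonneg fun y _ => mul_nonneg (wt_pos hp0 hp1 y).le (sq_nonneg _)),
          ← Real.rpow_mul (mu_pos hp0 hp1 b).le, mul_one_div, div_self hrne,
          Real.rpow_one]
      have hIH : ∀ b : Bool,
          (∑ y : Fin m → Bool,
              wt p y * (Tk p (sg p) (fun y' => f (Fin.cons b y')) y)^2) ^ ((1:ℝ)/(2/qq p))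
            ≤ ∑ y : Fin m → Bool, wt p y * |f (Fin.cons b y)| ^ qq p := by
        intro b
        have h1 := ih (fun y' => f (Fin.cons b y'))
        have h2 := Real.rpow_le_rpow
          (Finset.sum_nonneg fun y _ => mul_nonneg (wt_pos hp0 hp1 y).le (sq_nonneg _))
          h1 (by positivity : (0:ℝ) ≤ 1/(2/qq p))
        rwa [collapse_r _ (Finset.sum_nonneg fun y _ =>
          mul_nonneg (wt_pos hp0 hp1 y).le (Real.rpow_nonneg (abs_nonneg _) _))] at h2
      have hEb : ∀ b : Bool, (0:ℝ) ≤ ∑ y : Fin m → Bool, wt p y * |f (Fin.cons b y)| ^ qq p :=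
        fun b => Finset.sum_nonneg fun y _ =>
          mul_nonneg (wt_pos hp0 hp1 y).le (Real.rpow_nonneg (abs_nonneg _) _)
      calc ∑ x : Fin (m+1) → Bool, wt p x * (Tk p (sg p) f x)^2
          = ∑ y : Fin m → Bool, wt p y *
              ((Tk p (sg p) (lowA p f) y)^2 + rho p * (Tk p (sg p) (lowD p f) y)^2) := hsplit
        _ ≤ ∑ y : Fin m → Bool, wt p y *
              ((mu p true * |Tk p (sg p) (fun y' => f (Fin.cons true y')) y| ^ qq p
                + mu p false * |Tk p (sg p) (fun y' => f (Fin.cons false y')) y| ^ qq p)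
              ^ ((2:ℝ) / qq p)) := by
            apply Finset.sum_le_sum
            intro y _
            exact mul_le_mul_of_nonneg_left (step1 y) (wt_pos hp0 hp1 y).le
        _ ≤ ((∑ y : Fin m → Bool, wt p y *
                (mu p true * |Tk p (sg p) (fun y' => f (Fin.cons true y')) y| ^ qq p)
                  ^ ((2:ℝ)/qq p)) ^ ((1:ℝ)/(2/qq p))
              + (∑ y : Fin m → Bool, wt p y *
                (mu p false * |Tk p (sg p) (fun y' => f (Fin.cons false y')) y| ^ qq p)
                  ^ ((2:ℝ)/qq p)) ^ ((1:ℝ)/(2/qq p))) ^ ((2:ℝ)/qq p) := hmink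
        _ = (mu p true * (∑ y : Fin m → Bool, wt p y *
                (Tk p (sg p) (fun y' => f (Fin.cons true y')) y)^2) ^ ((1:ℝ)/(2/qq p))
              + mu p false * (∑ y : Fin m → Bool, wt p y *
                (Tk p (sg p) (fun y' => f (Fin.cons false y')) y)^2) ^ ((1:ℝ)/(2/qq p)))
                  ^ ((2:ℝ)/qq p) := by
            rw [hMb true, hMb false]
        _ ≤ (mu p true * ∑ y : Fin m → Bool, wt p y * |f (Fin.cons true y)| ^ qq p
              + mu p false * ∑ y : Fin m → Bool, wt p y * |f (Fin.cons false y)| ^ qq p)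
                  ^ ((2:ℝ)/qq p) := by
            apply Real.rpow_le_rpow
            · apply add_nonneg <;>
                exact mul_nonneg (mu_pos hp0 hp1 _).le (Real.rpow_nonneg
                  (Finset.sum_nonneg fun y _ =>
                    mul_nonneg (wt_pos hp0 hp1 y).le (sq_nonneg _)) _)
            · apply add_le_add
              · exact mul_le_mul_of_nonneg_left (hIH true) (mu_pos hp0 hp1 true).le
              · exact mul_le_mul_of_nonneg_left (hIH false) (mu_pos hp0 hp1 false).le
            · exact hr0.le
        _ = (∑ x : Fin (m+1) → Bool, wt p x * |f x| ^ qq p) ^ ((2:ℝ)/qq p) := by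
            rw [sum_pow_succ]

end LevelK

namespace LevelK

variable {p : ℝ}

lemma sum_wt (hp0 : 0 < p) (hp1 : p < 1) :
    ∀ n : ℕ, ∑ x : Fin n → Bool, wt p x = 1 := by
  intro n
  induction n with
  | zero =>
      rw [Fintype.sum_unique (fun x : Fin 0 → Bool => wt p x), wt_zero]
  | succ m ih =>
      rw [sum_succ (g := fun x => wt p x), Fintype.sum_bool]
      simp only [wt_cons]
      rw [← Finset.mul_sum, ← Finset.mul_sum, ih, mul_one, mul_one, sum_mu]

/-- main chain: level-k inequality for boolean f -/
theorem main (hp0 : 0 < p) (hp1 : p < 1) {n : ℕ} (f : (Fin n → Bool) → ℝ)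
    (hf : ∀ x, f x = 0 ∨ f x = 1) (ε : ℝ) (hε0 : 0 < ε) (hε1 : ε < 1) :
    (∑ S ∈ univ.filter (fun S : Finset (Fin n) =>
        (S.card : ℝ) ≤ (1 - ε) * Real.log (pexp p f) / Real.log (min p (1 - p))),
      fhat p f S ^ 2) ≤ (pexp p f) ^ ((2 * ε) / (1 + min p (1 - p))) := by
  have h1p : (0:ℝ) < 1 - p := by linarith
  have hl0 : 0 < lam p := lam_pos hp0 hp1
  have hl1 : lam p ≤ 1/2 := lam_le_half hp0 hp1
  have hlmin : min p (1-p) = lam p := rfl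
  have hfnn : ∀ x, 0 ≤ f x := by
    intro x; rcases hf x with h | h <;> rw [h] <;> norm_num
  have hfle : ∀ x, f x ≤ 1 := by
    intro x; rcases hf x with h | h <;> rw [h] <;> norm_num
  have hα0 : 0 ≤ pexp p f :=
    Finset.sum_nonneg fun x _ => mul_nonneg (wt_pos hp0 hp1 x).le (hfnn x)
  have hα1 : pexp p f ≤ 1 := by
    calc pexp p f ≤ ∑ x : Fin n → Bool, wt p x :=
          Finset.sum_le_sum fun x _ => by
            nlinarith [wt_pos hp0 hp1 x, hfle x, hfnn x]
      _ = 1 := sum_wt hp0 hp1 n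
  have hexpos : (0:ℝ) < (2 * ε) / (1 + min p (1 - p)) := by
    rw [hlmin]; positivity
  rcases eq_or_lt_of_le hα0 with hz | hαpos
  · -- pexp p f = 0 : f ≡ 0
    have hf0 : ∀ x ∈ (univ : Finset (Fin n → Bool)), wt p x * f x = 0 := by
      rw [← Finset.sum_eq_zero_iff_of_nonneg
        (fun x _ => mul_nonneg (wt_pos hp0 hp1 x).le (hfnn x))]
      exact hz.symm
    have hf0' : ∀ x, f x = 0 := by
      intro x
      have := hf0 x (mem_univ x)
      have hwp := wt_pos hp0 hp1 x
      nlinarith [this, hwp]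
    have hhat : ∀ S : Finset (Fin n), fhat p f S = 0 := by
      intro S
      unfold fhat pexp
      apply Finset.sum_eq_zero
      intro x _
      beta_reduce
      rw [hf0' x]; ring
    rw [← hz, Real.zero_rpow (ne_of_gt hexpos)]
    apply le_of_eq
    apply Finset.sum_eq_zero
    intro S _
    rw [hhat S]; ring
  · -- pexp p f > 0
    set α : ℝ := pexp p f with hαdef
    set l : ℝ := lam p with hldef
    have hllt1 : l < 1 := by rw [hldef]; linarith
    have hlog_neg : Real.log l < 0 := Real.log_neg hl0 hllt1
    have hlog_ne : Real.log l ≠ 0 := ne_of_lt hlog_neg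
    have hlogα : Real.log α ≤ 0 := Real.log_nonpos hαpos.le hα1
    set K : ℝ := (1 - ε) * Real.log α / Real.log l with hKdef
    have hK0 : 0 ≤ K := by
      rw [hKdef, div_nonneg_iff]
      right
      constructor
      · nlinarith [hlogα]
      · exact hlog_neg.le
    have hrho0 : 0 < rho p := rho_pos hp0 hp1
    have hrho1 : rho p ≤ 1 := rho_le_one hp0 hp1
    -- step 1 : restrict sum
    have hstep1 : (∑ S ∈ univ.filter (fun S : Finset (Fin n) =>
          (S.card : ℝ) ≤ (1 - ε) * Real.log α / Real.log (min p (1-p))),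
        fhat p f S ^ 2)
        ≤ (rho p) ^ (-K) * ∑ S : Finset (Fin n), (rho p) ^ (S.card) * fhat p f S ^ 2 := by
      rw [Finset.mul_sum]
      have hsub : (univ.filter (fun S : Finset (Fin n) =>
          (S.card : ℝ) ≤ (1 - ε) * Real.log α / Real.log (min p (1-p)))) ⊆ univ :=
        Finset.filter_subset _ _
      apply le_trans (b := ∑ S ∈ univ.filter (fun S : Finset (Fin n) =>
          (S.card : ℝ) ≤ (1 - ε) * Real.log α / Real.log (min p (1-p))),
        (rho p) ^ (-K) * ((rho p) ^ (S.card) * fhat p f S ^ 2))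
      · apply Finset.sum_le_sum
        intro S hS
        rw [Finset.mem_filter] at hS
        have hcard : (S.card : ℝ) ≤ K := by
          rw [hKdef]; exact hS.2
        have hone : (1:ℝ) ≤ (rho p) ^ ((S.card : ℝ) - K) := by
          have := Real.rpow_le_rpow_of_exponent_ge hrho0 hrho1
            (by linarith : (S.card : ℝ) - K ≤ 0)
          rwa [Real.rpow_zero] at this
        have hrw : (rho p) ^ (-K) * ((rho p) ^ (S.card) * fhat p f S ^ 2)
            = (rho p) ^ ((S.card : ℝ) - K) * fhat p f S ^ 2 := by
          rw [← Real.rpow_natCast (rho p) S.card, ← mul_assoc,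
            ← Real.rpow_add hrho0]
          ring_nf
        rw [hrw]
        nlinarith [sq_nonneg (fhat p f S), hone]
      · apply Finset.sum_le_sum_of_subset_of_nonneg hsub
        intro S _ _
        have : (0:ℝ) ≤ (rho p) ^ (S.card) := pow_nonneg hrho0.le _
        positivity
    -- step 2 : hypercontractivity
    have hbool : ∑ x : Fin n → Bool, wt p x * |f x| ^ qq p = α := by
      rw [hαdef]
      unfold pexp
      apply Finset.sum_congr rfl
      intro x _
      congr 1
      rcases hf x with h | h <;> rw [h]
      · rw [abs_zero, Real.zero_rpow (by have := qq_gt_one hp0 hp1; linarith)]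
      · rw [abs_one, Real.one_rpow]
    have hstep2 : ∑ S : Finset (Fin n), (rho p) ^ (S.card) * fhat p f S ^ 2
        ≤ α ^ ((2:ℝ) / qq p) := by
      rw [sum_pow_fhat (rho p) f]
      have hker : ∀ x z : Fin n → Bool, Kk p (rho p) x z = Kk p ((sg p)^2) x z := by
        intro x z; rw [sg_sq hp0 hp1]
      have := Tk_sq hp0 hp1 (sg p) f
      calc ∑ x : Fin n → Bool, ∑ z : Fin n → Bool,
            (wt p x * f x) * (wt p z * f z) * Kk p (rho p) x z
          = ∑ y : Fin n → Bool, wt p y * (Tk p (sg p) f y)^2 := by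
            rw [this]
            apply Finset.sum_congr rfl; intro x _
            apply Finset.sum_congr rfl; intro z _
            rw [hker x z]
        _ ≤ (∑ x : Fin n → Bool, wt p x * |f x| ^ qq p) ^ ((2:ℝ) / qq p) :=
            HC hp0 hp1 n f
        _ = α ^ ((2:ℝ) / qq p) := by rw [hbool]
    -- step 3 : exponent algebra
    have hstep3 : (rho p) ^ (-K) * α ^ ((2:ℝ) / qq p)
        = α ^ ((2 * ε) / (1 + min p (1 - p))) := by
      have hrhoeq : (rho p) ^ (-K) = Real.exp (Real.log l * (((2:ℝ)/(1+l)) * (-K))) := by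
        rw [show rho p = l ^ ((2:ℝ)/(1+l)) from rfl, ← Real.rpow_mul hl0.le,
          Real.rpow_def_of_pos hl0]
      have hαeq : α ^ ((2:ℝ) / qq p) = Real.exp (Real.log α * ((2:ℝ)/(1+l))) := by
        rw [show qq p = 1 + l from rfl, Real.rpow_def_of_pos hαpos]
      rw [hrhoeq, hαeq, ← Real.exp_add]
      rw [show (pexp p f) ^ ((2 * ε) / (1 + min p (1 - p)))
          = Real.exp (Real.log α * ((2*ε)/(1+l))) from Real.rpow_def_of_pos hαpos _]
      congr 1
      rw [hKdef]
      field_simp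
      ring
    calc (∑ S ∈ univ.filter (fun S : Finset (Fin n) =>
          (S.card : ℝ) ≤ (1 - ε) * Real.log (pexp p f) / Real.log (min p (1-p))),
        fhat p f S ^ 2)
        ≤ (rho p) ^ (-K) * ∑ S : Finset (Fin n), (rho p) ^ (S.card) * fhat p f S ^ 2 :=
          hstep1
      _ ≤ (rho p) ^ (-K) * (α ^ ((2:ℝ) / qq p)) :=
          mul_le_mul_of_nonneg_left hstep2 (Real.rpow_nonneg hrho0.le _)
      _ = (pexp p f) ^ ((2 * ε) / (1 + min p (1 - p))) := hstep3

end LevelK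

/-- Biased level-`k` inequality: for boolean `f` with `α = E[f]` and `λ = min{p,1−p}`,
for any `ε ∈ (0,1)`, `Σ_{|S| ≤ (1−ε)·ln α / ln λ} f̂(S)² ≤ α^{2ε/(1+λ)}`; in particular,
with `ε = 7/8`, `Σ_{|S| ≤ (1/8)·ln α / ln λ} f̂(S)² ≤ α^{7/6}`. -/
theorem stmt7 (n : ℕ) (p : ℝ) (hp0 : 0 < p) (hp1 : p < 1)
    (f : (Fin n → Bool) → ℝ) (hf : ∀ x, f x = 0 ∨ f x = 1)
    (ε : ℝ) (hε0 : 0 < ε) (hε1 : ε < 1) :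
    ((∑ S ∈ univ.filter (fun S : Finset (Fin n) =>
          (S.card : ℝ) ≤ (1 - ε) * Real.log (pexp p f) / Real.log (min p (1 - p))),
        fhat p f S ^ 2)
      ≤ (pexp p f) ^ ((2 * ε) / (1 + min p (1 - p))))
    ∧ ((∑ S ∈ univ.filter (fun S : Finset (Fin n) =>
          (S.card : ℝ) ≤ (1 / 8) * Real.log (pexp p f) / Real.log (min p (1 - p))),
        fhat p f S ^ 2)
      ≤ (pexp p f) ^ ((7 : ℝ) / 6)) := by

  have h1p : (0:ℝ) < 1 - p := by linarith
  have hl0 : 0 < min p (1-p) := lt_min hp0 h1p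
  have hl1 : min p (1-p) ≤ 1/2 := by
    rcases le_total p (1-p) with h | h
    · rw [min_eq_left h]; linarith
    · rw [min_eq_right h]; linarith
  constructor
  · exact LevelK.main hp0 hp1 f hf ε hε0 hε1
  · have h78 := LevelK.main hp0 hp1 f hf (7/8) (by norm_num) (by norm_num)
    rw [show (1:ℝ) - 7/8 = 1/8 by norm_num] at h78
    refine le_trans h78 ?_
    have hfnn : ∀ x, 0 ≤ f x := by
      intro x; rcases hf x with h | h <;> rw [h] <;> norm_num
    have hα0 : 0 ≤ pexp p f :=
      Finset.sum_nonneg fun x _ =>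
        mul_nonneg (LevelK.wt_pos hp0 hp1 x).le (hfnn x)
    have hα1 : pexp p f ≤ 1 := by
      calc pexp p f ≤ ∑ x : Fin n → Bool, wt p x :=
            Finset.sum_le_sum fun x _ => by
              rcases hf x with h | h <;> rw [h] <;>
                nlinarith [LevelK.wt_pos hp0 hp1 x]
        _ = 1 := LevelK.sum_wt hp0 hp1 n
    have h1l : (0:ℝ) < 1 + min p (1-p) := by linarith
    have hee : (7:ℝ)/6 ≤ 2 * (7/8) / (1 + min p (1-p)) := by
      rw [le_div_iff₀ h1l]; linarith
    rcases eq_or_lt_of_le hα0 with hz | hαpos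
    · rw [← hz, Real.zero_rpow (by positivity : (2:ℝ) * (7/8) / (1 + min p (1-p)) ≠ 0),
        Real.zero_rpow (by norm_num : (7:ℝ)/6 ≠ 0)]
    · exact Real.rpow_le_rpow_of_exponent_ge hαpos hα1 hee
end

section
/- Let a, b, c ∈ {0,1} be random variables with a = f(Z_A, Z_B), b = f(Z_A, Z_C), c = f(Z_A, Z_D), where Z_A, Z_B, Z_C, Z_D are independent i.i.d. vectors, each pair (a,b), (a,c), (b,c) has the same joint distribution, E[a] = P, and Var(E[f(Z_A, Z_B)|Z_A]) ≤ ρ·Var(f(Z_A,Z_B)). Then E[Majority(a,b,c)] ≤ 3ρP + 3(1−ρ)P². -/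
open Finset

lemma sum_wt (p : ℝ) (n : ℕ) : ∑ x : Fin n → Bool, wt p x = 1 := by
  unfold wt
  rw [← Fintype.prod_sum (fun (i : Fin n) (b : Bool) => if b then p else 1 - p)]
  simp

lemma wt_nonneg {p : ℝ} (hp0 : 0 ≤ p) (hp1 : p ≤ 1) {n : ℕ} (x : Fin n → Bool) : 0 ≤ wt p x :=
  Finset.prod_nonneg fun i _ => by split <;> linarith

lemma pexp_mono {p : ℝ} (hp0 : 0 ≤ p) (hp1 : p ≤ 1) {n : ℕ} {g h : (Fin n → Bool) → ℝ}
    (hgh : ∀ x, g x ≤ h x) : pexp p g ≤ pexp p h :=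
  Finset.sum_le_sum fun x _ => mul_le_mul_of_nonneg_left (hgh x) (wt_nonneg hp0 hp1 x)

lemma pexp_affine (p : ℝ) {n : ℕ} (A B : ℝ) (h : (Fin n → Bool) → ℝ) :
    pexp p (fun x => A + B * h x) = A + B * pexp p h := by
  unfold pexp
  have e : ∀ x : Fin n → Bool, wt p x * (A + B * h x) = A * wt p x + B * (wt p x * h x) :=
    fun x => by ring
  simp_rw [e, Finset.sum_add_distrib, ← Finset.mul_sum, sum_wt, mul_one]

lemma pexp_smul (p : ℝ) {n : ℕ} (c : ℝ) (g : (Fin n → Bool) → ℝ) :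
    pexp p (fun x => c * g x) = c * pexp p g := by
  unfold pexp; rw [Finset.mul_sum]; exact Finset.sum_congr rfl fun x _ => by ring

/-- Three-look majority bound: with `a = f(Z_A,Z_B)`, `b = f(Z_A,Z_C)`, `c = f(Z_A,Z_D)`
boolean-valued, `Z_A,Z_B,Z_C,Z_D` independent i.i.d. Bernoulli(p) vectors,
`P = E[a]`, and `Var(E[f(Z_A,Z_B)|Z_A]) ≤ ρ·Var(f(Z_A,Z_B))`, one has
`E[Majority(a,b,c)] ≤ 3ρP + 3(1−ρ)P²`. -/
theorem stmt14 (a b : ℕ) (p ρ : ℝ) (hp0 : 0 ≤ p) (hp1 : p ≤ 1)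
    (hρ0 : 0 ≤ ρ) (hρ1 : ρ ≤ 1)
    (f : (Fin a → Bool) → (Fin b → Bool) → ℝ)
    (hf : ∀ xA xB, f xA xB = 0 ∨ f xA xB = 1)
    (hvar :
      pexp p (fun xA => (pexp p fun xB => f xA xB) ^ 2)
          - (pexp p fun xA => pexp p fun xB => f xA xB) ^ 2
        ≤ ρ * (pexp p (fun xA => pexp p fun xB => (f xA xB) ^ 2)
          - (pexp p fun xA => pexp p fun xB => f xA xB) ^ 2)) :
    (pexp p fun xA => pexp p fun xB => pexp p fun xC => pexp p fun xD =>
        if 2 ≤ f xA xB + f xA xC + f xA xD then (1 : ℝ) else 0)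
      ≤ 3 * ρ * (pexp p fun xA => pexp p fun xB => f xA xB)
        + 3 * (1 - ρ) * (pexp p fun xA => pexp p fun xB => f xA xB) ^ 2 := by
  have hsq : ∀ xA xB, (f xA xB) ^ 2 = f xA xB := fun xA xB => by
    rcases hf xA xB with h | h <;> rw [h] <;> ring
  -- pointwise indicator bound
  have ind_le : ∀ xA xB xC xD,
      (if 2 ≤ f xA xB + f xA xC + f xA xD then (1 : ℝ) else 0)
        ≤ f xA xB * f xA xC + f xA xB * f xA xD + f xA xC * f xA xD := by
    intro xA xB xC xD
    rcases hf xA xB with h1 | h1 <;> rcases hf xA xC with h2 | h2 <;>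
      rcases hf xA xD with h3 | h3 <;> rw [h1, h2, h3] <;> norm_num
  set g : (Fin a → Bool) → ℝ := fun xA => pexp p fun xB => f xA xB with hg
  -- for fixed xA, the inner triple expectation is ≤ 3 g(xA)^2
  have key : ∀ xA,
      (pexp p fun xB => pexp p fun xC => pexp p fun xD =>
          if 2 ≤ f xA xB + f xA xC + f xA xD then (1 : ℝ) else 0)
        ≤ 3 * g xA ^ 2 := by
    intro xA
    have step1 :
        (pexp p fun xB => pexp p fun xC => pexp p fun xD =>
            if 2 ≤ f xA xB + f xA xC + f xA xD then (1 : ℝ) else 0)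
          ≤ pexp p fun xB => pexp p fun xC => pexp p fun xD =>
            f xA xB * f xA xC + f xA xB * f xA xD + f xA xC * f xA xD :=
      pexp_mono hp0 hp1 fun xB => pexp_mono hp0 hp1 fun xC =>
        pexp_mono hp0 hp1 fun xD => ind_le xA xB xC xD
    have e1 : ∀ xB xC,
        (pexp p fun xD => f xA xB * f xA xC + f xA xB * f xA xD + f xA xC * f xA xD)
          = f xA xB * f xA xC + (f xA xB + f xA xC) * g xA := by
      intro xB xC
      rw [show (fun xD => f xA xB * f xA xC + f xA xB * f xA xD + f xA xC * f xA xD)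
            = fun xD => f xA xB * f xA xC + (f xA xB + f xA xC) * f xA xD from
          funext fun xD => by ring,
        pexp_affine]
    have e2 : ∀ xB,
        (pexp p fun xC => f xA xB * f xA xC + (f xA xB + f xA xC) * g xA)
          = f xA xB * g xA + (f xA xB + g xA) * g xA := by
      intro xB
      rw [show (fun xC => f xA xB * f xA xC + (f xA xB + f xA xC) * g xA)
            = fun xC => f xA xB * g xA + (f xA xB + g xA) * f xA xC from
          funext fun xC => by ring,
        pexp_affine]
    have e3 :
        (pexp p fun xB => f xA xB * g xA + (f xA xB + g xA) * g xA) = 3 * g xA ^ 2 := by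
      rw [show (fun xB => f xA xB * g xA + (f xA xB + g xA) * g xA)
            = fun xB => g xA * g xA + (2 * g xA) * f xA xB from
          funext fun xB => by ring,
        pexp_affine]
      ring
    calc _ ≤ _ := step1
      _ = 3 * g xA ^ 2 := by simp_rw [e1, e2, e3]
  have step2 :
      (pexp p fun xA => pexp p fun xB => pexp p fun xC => pexp p fun xD =>
          if 2 ≤ f xA xB + f xA xC + f xA xD then (1 : ℝ) else 0)
        ≤ pexp p fun xA => 3 * g xA ^ 2 :=
    pexp_mono hp0 hp1 key
  rw [pexp_smul p 3 (fun xA => g xA ^ 2)] at step2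
  simp_rw [hsq] at hvar
  set P : ℝ := pexp p fun xA => pexp p fun xB => f xA xB with hP
  set G : ℝ := pexp p fun xA => g xA ^ 2 with hG
  have hvar' : G - P ^ 2 ≤ ρ * (P - P ^ 2) := hvar
  calc _ ≤ 3 * G := step2
    _ ≤ _ := by nlinarith [hvar']
end
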